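/- arXiv:1810.04205 — 6 statements merged into one kernel-verified Lean document; each statement's English description precedes it below -/
import Mathlib

section
/- Let (X,d) be a metric space, let E and F be two nonempty closed subsets of X with F ⊂ E, and let u₀ : E → ℝ be a K-Lipschitz function such that λ₀ := lip(u₀, F) < K. Then for every ε > 0 there exists a function u : E → ℝ such that |u − u₀| ≤ ε on E, u = u₀ on F, and lip(u, B) < K for every bounded subset B of E. -/
open Metric Set MeasureTheory

/-- `lipOn f s` is the Lipschitz constant of `f` on `s`:
the infimum of all `L > 0` such that `|f x - f y| ≤ L * dist x y` for all `x, y ∈ s`. -/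
noncomputable def lipOn {X : Type*} [PseudoMetricSpace X] (f : X → ℝ) (s : Set X) : ℝ :=
  sInf {L : ℝ | 0 < L ∧ ∀ x ∈ s, ∀ y ∈ s, |f x - f y| ≤ L * dist x y}

/-- `f` is `K`-Lipschitz on `s`. -/
def IsLipschitzWithOn {X : Type*} [PseudoMetricSpace X] (K : ℝ) (f : X → ℝ) (s : Set X) : Prop :=
  ∀ x ∈ s, ∀ y ∈ s, |f x - f y| ≤ K * dist x y

/-- The basic contraction `s ↦ s / (1 + |s|)` is bounded by one. -/
lemma phi_abs_le_one (s : ℝ) : |s / (1 + |s|)| ≤ 1 := by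
  have h : (0:ℝ) < 1 + |s| := by positivity
  rw [abs_div, abs_of_pos h, div_le_one h]
  linarith [abs_nonneg s]

set_option maxHeartbeats 1000000 in
/-- One-sided Lipschitz improvement for `T s = s - c * (s / (1 + |s|))`. -/
lemma T_lip_aux (c M x y : ℝ) (hc : 0 < c) (hc2 : c ≤ 1/2) (hxy : y ≤ x)
    (hx : |x| ≤ M) (hy : |y| ≤ M) :
    |(x - c * (x / (1 + |x|))) - (y - c * (y / (1 + |y|)))| ≤ (1 - c / (1 + M)^2) * (x - y) := by
  have hM : 0 ≤ M := le_trans (abs_nonneg x) hx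
  have hp : (0:ℝ) < 1 + |x| := by positivity
  have hq : (0:ℝ) < 1 + |y| := by positivity
  have hxa := abs_nonneg x
  have hya := abs_nonneg y
  have hax := le_abs_self x
  have hax' := neg_abs_le x
  have hay := le_abs_self y
  have hay' := neg_abs_le y
  have h5 : 0 ≤ x * |y| - y * |x| := by
    rcases abs_cases x with ⟨hx1, hx2⟩ | ⟨hx1, hx2⟩ <;>
      rcases abs_cases y with ⟨hy1, hy2⟩ | ⟨hy1, hy2⟩ <;> rw [hx1, hy1] <;> nlinarith
  have h6 : 0 ≤ x * |x| - y * |y| := by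
    rcases abs_cases x with ⟨hx1, hx2⟩ | ⟨hx1, hx2⟩ <;>
      rcases abs_cases y with ⟨hy1, hy2⟩ | ⟨hy1, hy2⟩ <;> rw [hx1, hy1] <;> nlinarith
  have hnum : x - y ≤ x * (1 + |y|) - y * (1 + |x|) := by linarith
  have hnum' : x * (1 + |y|) - y * (1 + |x|) ≤ (x - y) * ((1 + |x|) * (1 + |y|)) := by
    nlinarith [h6, mul_nonneg (sub_nonneg.mpr hxy) (mul_nonneg hxa hya)]
  have hprod : (1 + |x|) * (1 + |y|) ≤ (1 + M)^2 := by nlinarith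
  have hdiff : x / (1 + |x|) - y / (1 + |y|) = (x * (1 + |y|) - y * (1 + |x|)) / ((1 + |x|) * (1 + |y|)) := by
    field_simp
  have hpq : (0:ℝ) < (1 + |x|) * (1 + |y|) := by positivity
  have hM2 : (0:ℝ) < (1 + M)^2 := by positivity
  have key1 : x / (1 + |x|) - y / (1 + |y|) ≤ x - y := by
    rw [hdiff, div_le_iff₀ hpq]; linarith
  have key2 : (x - y) / (1 + M)^2 ≤ x / (1 + |x|) - y / (1 + |y|) := by
    rw [hdiff, div_le_div_iff₀ hM2 hpq]
    calc (x - y) * ((1 + |x|) * (1 + |y|)) ≤ (x - y) * (1 + M)^2 :=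
          mul_le_mul_of_nonneg_left hprod (by linarith)
      _ ≤ (x * (1 + |y|) - y * (1 + |x|)) * (1 + M)^2 :=
          mul_le_mul_of_nonneg_right hnum hM2.le
  have hxy0 : (0:ℝ) ≤ x - y := by linarith
  have h4 : (1:ℝ) ≤ (1 + M)^2 := by nlinarith
  have h3 : c / (1 + M)^2 ≤ c := div_le_self hc.le h4
  have hr0 : 0 ≤ (1 - c / (1 + M)^2) * (x - y) :=
    mul_nonneg (by linarith) hxy0
  have e1 : (0:ℝ) ≤ (1 - c) * (x - y) := mul_nonneg (by linarith) hxy0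
  have h1 : c * ((x - y) / (1 + M)^2) ≤ c * (x / (1 + |x|) - y / (1 + |y|)) :=
    mul_le_mul_of_nonneg_left key2 hc.le
  have h1' : c * (x / (1 + |x|) - y / (1 + |y|)) ≤ c * (x - y) :=
    mul_le_mul_of_nonneg_left key1 hc.le
  rw [abs_le]
  constructor
  · linarith [h1', e1, hr0]
  · have h2 : c * ((x - y) / (1 + M)^2) = c / (1 + M)^2 * (x - y) := by ring
    linarith [h1, h2]

/-- Symmetric version. -/
lemma T_lip (c M x y : ℝ) (hc : 0 < c) (hc2 : c ≤ 1/2)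
    (hx : |x| ≤ M) (hy : |y| ≤ M) :
    |(x - c * (x / (1 + |x|))) - (y - c * (y / (1 + |y|)))| ≤ (1 - c / (1 + M)^2) * |x - y| := by
  rcases le_total y x with h | h
  · rw [abs_of_nonneg (by linarith : (0:ℝ) ≤ x - y)]
    exact T_lip_aux c M x y hc hc2 h hx hy
  · rw [abs_of_nonpos (by linarith : x - y ≤ 0), abs_sub_comm]
    have := T_lip_aux c M y x hc hc2 h hy hx
    simpa using this

/-- Theorem: approximation, in a metric space, of a `K`-Lipschitz function `u₀ : E → ℝ`
whose Lipschitz constant on a closed subset `F ⊆ E` is smaller than `K`, by a function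
coinciding with `u₀` on `F` and with Lipschitz constant `< K` on every bounded subset. -/
theorem stmt_6 {X : Type*} [MetricSpace X] (E F : Set X)
    (hE : IsClosed E) (hF : IsClosed F) (hEne : E.Nonempty) (hFne : F.Nonempty)
    (hFE : F ⊆ E) (K : ℝ) (u₀ : X → ℝ) (hu₀ : IsLipschitzWithOn K u₀ E)
    (hlt : lipOn u₀ F < K) (ε : ℝ) (hε : 0 < ε) :
    ∃ u : X → ℝ,
      (∀ x ∈ E, |u x - u₀ x| ≤ ε) ∧
      (∀ x ∈ F, u x = u₀ x) ∧
      (∀ B ⊆ E, Bornology.IsBounded B → lipOn u B < K) := by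
  -- K is positive
  have hlip0 : 0 ≤ lipOn u₀ F := Real.sInf_nonneg (fun L hL => hL.1.le)
  have hK : 0 < K := lt_of_le_of_lt hlip0 hlt
  -- Get λ = l with lipOn u₀ F ≤ l < K and u₀ l-Lipschitz on F
  have hKmem : K ∈ {L : ℝ | 0 < L ∧ ∀ x ∈ F, ∀ y ∈ F, |u₀ x - u₀ y| ≤ L * dist x y} :=
    ⟨hK, fun x hx y hy => hu₀ x (hFE hx) y (hFE hy)⟩
  have hbdd : BddBelow {L : ℝ | 0 < L ∧ ∀ x ∈ F, ∀ y ∈ F, |u₀ x - u₀ y| ≤ L * dist x y} :=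
    ⟨0, fun L hL => hL.1.le⟩
  obtain ⟨l, ⟨hl0, hlF⟩, hlK⟩ := (csInf_lt_iff hbdd ⟨K, hKmem⟩).mp hlt
  -- Extend u₀|F to an l-Lipschitz function v on X
  have hLipF : LipschitzOnWith l.toNNReal u₀ F := by
    rw [lipschitzOnWith_iff_dist_le_mul]
    intro x hx y hy
    rw [Real.dist_eq]
    calc |u₀ x - u₀ y| ≤ l * dist x y := hlF x hx y hy
      _ = (l.toNNReal : ℝ) * dist x y := by rw [Real.coe_toNNReal l hl0.le]
  obtain ⟨v, hv, hveq⟩ := hLipF.extend_real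
  have hvl : ∀ x y : X, |v x - v y| ≤ l * dist x y := by
    intro x y
    have := hv.dist_le_mul x y
    rwa [Real.dist_eq, Real.coe_toNNReal l hl0.le] at this
  obtain ⟨x₀, hx₀⟩ := hFne
  -- the tilt parameter
  set c : ℝ := min (1/2) (ε/2) with hcdef
  have hc0 : 0 < c := lt_min (by norm_num) (by linarith)
  have hc2 : c ≤ 1/2 := min_le_left _ _
  have hcε : 2 * c ≤ ε := by
    have := min_le_right (1/2 : ℝ) (ε/2); linarith
  -- the tilted function w
  set w : X → ℝ := fun x => u₀ x - c * ((u₀ x - u₀ x₀) / (1 + |u₀ x - u₀ x₀|)) with hwdef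
  set u : X → ℝ := fun x => max (w x - c) (min (v x) (w x + c)) with hudef
  have hwu : ∀ x, |w x - u₀ x| ≤ c := by
    intro x
    have := phi_abs_le_one (u₀ x - u₀ x₀)
    simp only [hwdef]
    rw [show u₀ x - c * ((u₀ x - u₀ x₀) / (1 + |u₀ x - u₀ x₀|)) - u₀ x
        = -(c * ((u₀ x - u₀ x₀) / (1 + |u₀ x - u₀ x₀|))) by ring]
    rw [abs_neg, abs_mul, abs_of_pos hc0]
    nlinarith
  have hband : ∀ x, w x - c ≤ u x ∧ u x ≤ w x + c := by
    intro x
    constructor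
    · exact le_max_left _ _
    · apply max_le
      · linarith
      · exact min_le_right _ _
  refine ⟨u, ?_, ?_, ?_⟩
  · -- |u - u₀| ≤ ε on E
    intro x _
    have h1 := (hband x).1
    have h2 := (hband x).2
    have h3 := hwu x
    rw [abs_le] at h3 ⊢
    constructor <;> linarith
  · -- u = u₀ on F
    intro x hx
    have hvx : v x = u₀ x := (hveq hx).symm
    have h3 := hwu x
    rw [abs_le] at h3
    simp only [hudef]
    rw [hvx]
    rw [min_eq_left (by linarith), max_eq_right (by linarith)]
  · -- lipOn u B < K for bounded B ⊆ E
    intro B hBE hB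
    obtain ⟨r, hr⟩ := hB.subset_closedBall x₀
    set M : ℝ := K * max r 0 with hMdef
    have hM0 : 0 ≤ M := mul_nonneg hK.le (le_max_right _ _)
    have hM2 : (0:ℝ) < (1 + M)^2 := by positivity
    set L : ℝ := max l ((1 - c / (1 + M)^2) * K) with hLdef
    have hL0 : 0 < L := lt_max_of_lt_left hl0
    have hLK : L < K := by
      apply max_lt hlK
      have hcd : 0 < c / (1 + M)^2 := div_pos hc0 hM2
      nlinarith
    have hmem : L ∈ {L : ℝ | 0 < L ∧ ∀ x ∈ B, ∀ y ∈ B, |u x - u y| ≤ L * dist x y} := by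
      refine ⟨hL0, fun x hx y hy => ?_⟩
      have hdnn : (0:ℝ) ≤ dist x y := dist_nonneg
      -- bound on s-values
      have hsx : |u₀ x - u₀ x₀| ≤ M := by
        calc |u₀ x - u₀ x₀| ≤ K * dist x x₀ := hu₀ x (hBE hx) x₀ (hFE hx₀)
          _ ≤ K * max r 0 := by
              apply mul_le_mul_of_nonneg_left _ hK.le
              exact le_trans (mem_closedBall.mp (hr hx)) (le_max_left _ _)
      have hsy : |u₀ y - u₀ x₀| ≤ M := by
        calc |u₀ y - u₀ x₀| ≤ K * dist y x₀ := hu₀ y (hBE hy) x₀ (hFE hx₀)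
          _ ≤ K * max r 0 := by
              apply mul_le_mul_of_nonneg_left _ hK.le
              exact le_trans (mem_closedBall.mp (hr hy)) (le_max_left _ _)
      -- w is ((1 - c/(1+M)^2) * K)-Lipschitz on B
      have hfac : (0:ℝ) ≤ 1 - c / (1 + M)^2 := by
        have h3 : c / (1 + M)^2 ≤ c := by
          rw [div_le_iff₀ hM2]
          have h4 : (1:ℝ) ≤ (1 + M)^2 := by nlinarith
          nlinarith
        linarith
      have hW : |w x - w y| ≤ L * dist x y := by
        have hT := T_lip c M (u₀ x - u₀ x₀) (u₀ y - u₀ x₀) hc0 hc2 hsx hsy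
        have hrw : w x - w y = (u₀ x - u₀ x₀ - c * ((u₀ x - u₀ x₀) / (1 + |u₀ x - u₀ x₀|)))
            - (u₀ y - u₀ x₀ - c * ((u₀ y - u₀ x₀) / (1 + |u₀ y - u₀ x₀|))) := by
          simp only [hwdef]; ring
        have habs : |u₀ x - u₀ x₀ - (u₀ y - u₀ x₀)| = |u₀ x - u₀ y| := by ring_nf
        calc |w x - w y| ≤ (1 - c / (1 + M)^2) * |u₀ x - u₀ x₀ - (u₀ y - u₀ x₀)| := by
              rw [hrw]; exact hT
          _ = (1 - c / (1 + M)^2) * |u₀ x - u₀ y| := by rw [habs]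
          _ ≤ (1 - c / (1 + M)^2) * (K * dist x y) :=
              mul_le_mul_of_nonneg_left (hu₀ x (hBE hx) y (hBE hy)) hfac
          _ = ((1 - c / (1 + M)^2) * K) * dist x y := by ring
          _ ≤ L * dist x y := mul_le_mul_of_nonneg_right (le_max_right _ _) hdnn
      have hV : |v x - v y| ≤ L * dist x y :=
        le_trans (hvl x y) (mul_le_mul_of_nonneg_right (le_max_left _ _) hdnn)
      have hA : |(w x - c) - (w y - c)| ≤ L * dist x y := by
        rw [show (w x - c) - (w y - c) = w x - w y by ring]; exact hW
      have hBb : |(w x + c) - (w y + c)| ≤ L * dist x y := by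
        rw [show (w x + c) - (w y + c) = w x - w y by ring]; exact hW
      calc |u x - u y| ≤ max |(w x - c) - (w y - c)| |min (v x) (w x + c) - min (v y) (w y + c)| :=
            abs_max_sub_max_le_max _ _ _ _
        _ ≤ L * dist x y := by
            apply max_le hA
            exact le_trans (abs_min_sub_min_le_max _ _ _ _) (max_le hV hBb)
    calc lipOn u B ≤ L := csInf_le ⟨0, fun L' hL' => hL'.1.le⟩ hmem
      _ < K := hLK
end

section
/- Let k ∈ ℕ ∪ {∞} and let X be a Banach space with the property that for every Lipschitz function f : X → ℝ and every η > 0 there exists a function g : X → ℝ of class C^k on X such that |f − g| ≤ η on X and lip(g, B(x₀,r)) ≤ lip(f, B(x₀, r+η)) + η for every closed ball B(x₀,r) ⊂ X. Let Ω ⊂ X be open and let u : Ω → ℝ be a K-Lipschitz function with the property that lip(u, B) < K for every bounded subset B of Ω. Then, for every continuous function ε : Ω → (0,+∞), there exists v : Ω → ℝ of class C^k on Ω such that (1) |u(x) − v(x)| ≤ ε(x) for every x ∈ Ω, and (2) ‖Dv(x)‖_* < K for all x ∈ Ω. -/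
open Metric Set MeasureTheory

lemma lipOn_bddBelow {Y : Type*} [PseudoMetricSpace Y] (f : Y → ℝ) (s : Set Y) :
    BddBelow {L : ℝ | 0 < L ∧ ∀ x ∈ s, ∀ y ∈ s, |f x - f y| ≤ L * dist x y} :=
  ⟨0, fun _ hL => hL.1.le⟩

lemma lipOn_nonneg {Y : Type*} [PseudoMetricSpace Y] (f : Y → ℝ) (s : Set Y) : 0 ≤ lipOn f s :=
  Real.sInf_nonneg (fun _ hL => hL.1.le)

lemma lipOn_le {Y : Type*} [PseudoMetricSpace Y] {f : Y → ℝ} {s : Set Y} {L : ℝ} (hL : 0 < L)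
    (h : ∀ x ∈ s, ∀ y ∈ s, |f x - f y| ≤ L * dist x y) : lipOn f s ≤ L :=
  csInf_le (lipOn_bddBelow f s) ⟨hL, h⟩

lemma lipOn_mono {Y : Type*} [PseudoMetricSpace Y] {f : Y → ℝ} {s t : Set Y} (hst : s ⊆ t)
    {L₀ : ℝ} (hL₀ : 0 < L₀) (hbt : ∀ x ∈ t, ∀ y ∈ t, |f x - f y| ≤ L₀ * dist x y) :
    lipOn f s ≤ lipOn f t :=
  csInf_le_csInf (lipOn_bddBelow f s) ⟨L₀, hL₀, hbt⟩
    (fun L hL => ⟨hL.1, fun x hx y hy => hL.2 x (hst hx) y (hst hy)⟩)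

lemma lipOn_congr {Y : Type*} [PseudoMetricSpace Y] {f g : Y → ℝ} {s : Set Y}
    (h : ∀ x ∈ s, f x = g x) : lipOn f s = lipOn g s := by
  unfold lipOn
  congr 1
  ext L
  exact ⟨fun hL => ⟨hL.1, fun x hx y hy => by rw [← h x hx, ← h y hy]; exact hL.2 x hx y hy⟩,
    fun hL => ⟨hL.1, fun x hx y hy => by rw [h x hx, h y hy]; exact hL.2 x hx y hy⟩⟩

/-- Key consequence of the approximation property: pointwise derivative bound. -/
lemma normFderiv_le {X : Type*} [NormedAddCommGroup X] [NormedSpace ℝ X]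
    {k : ℕ∞} (hk : 1 ≤ k) {g f : X → ℝ} {η L : ℝ} (hη : 0 < η) (hL : 0 < L)
    (hf : ∀ x y : X, |f x - f y| ≤ L * dist x y)
    (hg : ContDiff ℝ k g)
    (hball : ∀ (x₀ : X) (r : ℝ), 0 < r →
      lipOn g (closedBall x₀ r) ≤ lipOn f (closedBall x₀ (r + η)) + η)
    (x : X) (R : ℝ) (hR : 0 < R) :
    ‖fderiv ℝ g x‖ ≤ lipOn f (closedBall x (R + η)) + η := by
  have hk' : (1 : WithTop ℕ∞) ≤ (k : WithTop ℕ∞) := by exact_mod_cast hk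
  have hgd : DifferentiableAt ℝ g x := (hg.differentiable (zero_lt_one.trans_le hk').ne').differentiableAt
  obtain ⟨K₀, t, ht, hlip⟩ := ((hg.contDiffAt (x := x)).of_le hk').exists_lipschitzOnWith
  obtain ⟨r₀, hr₀, hr₀sub⟩ := Metric.nhds_basis_closedBall.mem_iff.1 ht
  set r : ℝ := min r₀ R with hrdef
  have hrpos : 0 < r := lt_min hr₀ hR
  -- the set of admissible constants for g on the small ball is nonempty
  have hne : ((K₀ : ℝ) + 1) ∈ {L : ℝ | 0 < L ∧ ∀ a ∈ closedBall x r, ∀ b ∈ closedBall x r,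
      |g a - g b| ≤ L * dist a b} := by
    refine ⟨by positivity, fun a ha b hb => ?_⟩
    have hsub : closedBall x r ⊆ t := le_trans (closedBall_subset_closedBall (min_le_left _ _)) hr₀sub
    have := hlip.dist_le_mul a (hsub ha) b (hsub hb)
    rw [Real.dist_eq] at this
    nlinarith [dist_nonneg (x := a) (y := b)]
  have h1 : ‖fderiv ℝ g x‖ ≤ lipOn g (closedBall x r) := by
    refine le_csInf ⟨_, hne⟩ (fun L hL => ?_)
    refine hgd.hasFDerivAt.le_of_lip' hL.1.le ?_
    filter_upwards [closedBall_mem_nhds x hrpos] with y hy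
    rw [Real.norm_eq_abs, ← dist_eq_norm]
    exact hL.2 y hy x (mem_closedBall_self hrpos.le)
  have h2 := hball x r hrpos
  have h3 : lipOn f (closedBall x (r + η)) ≤ lipOn f (closedBall x (R + η)) := by
    refine lipOn_mono (closedBall_subset_closedBall (by simp [hrdef])) hL ?_
    exact fun a _ b _ => hf a b
  linarith

/-- A global bound for the derivative of the smooth transition function. -/
lemma exists_Csigma : ∃ C : ℝ, 0 ≤ C ∧ ∀ t : ℝ, |deriv Real.smoothTransition t| ≤ C := by
  have hcd : Continuous (deriv Real.smoothTransition) :=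
    (Real.smoothTransition.contDiff (n := 1)).continuous_deriv le_rfl
  obtain ⟨z, hz, hmax⟩ := isCompact_Icc.exists_isMaxOn (Set.nonempty_Icc.2 (by norm_num))
    (hcd.abs.continuousOn (s := Set.Icc (-1 : ℝ) 2))
  refine ⟨|deriv Real.smoothTransition z|, abs_nonneg _, fun t => ?_⟩
  by_cases ht : t ∈ Set.Icc (-1 : ℝ) 2
  · exact hmax ht
  · have h0 : deriv Real.smoothTransition t = 0 := by
      rcases not_and_or.1 (Set.mem_Icc.not.1 ht) with h | h
    
      · have ht' : t < -1 := lt_of_not_ge h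
        have hev : Real.smoothTransition =ᶠ[nhds t] (fun _ => 0) := by
          filter_upwards [isOpen_Iio.mem_nhds (show t ∈ Set.Iio (0:ℝ) by exact lt_trans ht' (by norm_num))] with y hy
          exact Real.smoothTransition.zero_of_nonpos (le_of_lt hy)
        rw [hev.deriv_eq, deriv_const]
      · have ht' : 2 < t := lt_of_not_ge h
        have hev : Real.smoothTransition =ᶠ[nhds t] (fun _ => 1) := by
          filter_upwards [(isOpen_Ioi (a := (1:ℝ))).mem_nhds (Set.mem_Ioi.2 (by linarith))] with y hy
          exact Real.smoothTransition.one_of_one_le (le_of_lt hy)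
        rw [hev.deriv_eq, deriv_const]
    rw [h0, abs_zero]
    exact abs_nonneg _

set_option maxHeartbeats 4000000 in
/-- Claim 2: a `K`-Lipschitz function on an open set `Ω` of a suitable Banach space, whose
Lipschitz constant on every bounded subset of `Ω` is `< K`, can be `C^0`-finely approximated
by `C^k` functions with derivative of norm `< K` everywhere on `Ω`. -/
theorem stmt_9 (k : ℕ∞) (hk : 1 ≤ k)
    {X : Type*} [NormedAddCommGroup X] [NormedSpace ℝ X] [CompleteSpace X]
    (hX : ∀ f : X → ℝ, (∃ K : ℝ, IsLipschitzWithOn K f Set.univ) → ∀ η : ℝ, 0 < η →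
      ∃ g : X → ℝ, ContDiff ℝ k g ∧ (∀ x : X, |f x - g x| ≤ η) ∧
        ∀ (x₀ : X) (r : ℝ), 0 < r →
          lipOn g (closedBall x₀ r) ≤ lipOn f (closedBall x₀ (r + η)) + η)
    (Ω : Set X) (hΩ : IsOpen Ω) (K : ℝ) (u : X → ℝ)
    (hu : IsLipschitzWithOn K u Ω)
    (hloc : ∀ B ⊆ Ω, Bornology.IsBounded B → lipOn u B < K)
    (ε : X → ℝ) (hεpos : ∀ x ∈ Ω, 0 < ε x) (hεcont : ContinuousOn ε Ω) :
    ∃ v : X → ℝ,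
      ContDiffOn ℝ k v Ω ∧
      (∀ x ∈ Ω, |u x - v x| ≤ ε x) ∧
      (∀ x ∈ Ω, ‖fderiv ℝ v x‖ < K) := by
  classical
  have hk' : (1 : WithTop ℕ∞) ≤ (k : WithTop ℕ∞) := by exact_mod_cast hk
  -- K is positive
  have hK : 0 < K := by
    have h0 := hloc ∅ (Set.empty_subset Ω) Bornology.isBounded_empty
    have he : lipOn u (∅ : Set X) = 0 := by
      have hset : {L : ℝ | 0 < L ∧ ∀ x ∈ (∅ : Set X), ∀ y ∈ (∅ : Set X), |u x - u y| ≤ L * dist x y}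
          = Set.Ioi 0 := by ext L; simp
      rw [lipOn, hset, csInf_Ioi]
    rw [he] at h0; exact h0
  -- trivial case : empty domain
  rcases Set.eq_empty_or_nonempty Ω with hΩe | ⟨x₀, hx₀⟩
  · exact ⟨0, by rw [hΩe]; exact contDiffOn_of_locally_contDiffOn (by simp), fun x hx => by rw [hΩe] at hx; exact absurd hx (Set.notMem_empty x),
      fun x hx => by rw [hΩe] at hx; exact absurd hx (Set.notMem_empty x)⟩
  -- trivial case : subsingleton space
  rcases subsingleton_or_nontrivial X with hXs | hXnt
  · refine ⟨fun _ => u x₀, contDiffOn_const, fun x hx => ?_, fun x hx => ?_⟩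
    · have : x = x₀ := Subsingleton.elim _ _
      rw [this]; simp; exact (hεpos x₀ (this ▸ hx)).le
    · have : fderiv ℝ (fun _ : X => u x₀) x = 0 := fderiv_const_apply (u x₀)
      rw [this]; simp [hK]
  -- ### the 1-Lipschitz positive minorant of ε
  set e : X → ℝ := fun x => sInf ((fun y => min (ε y) 1 + dist x y) '' Ω) with hedef
  have heBdd : ∀ x : X, BddBelow ((fun y => min (ε y) 1 + dist x y) '' Ω) := by
    rintro x
    refine ⟨0, ?_⟩
    rintro z ⟨y, hy, rfl⟩
    have := (hεpos y hy).le
    have := dist_nonneg (x := x) (y := y)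
    simp only []
    have h1 : (0:ℝ) ≤ min (ε y) 1 := le_min (hεpos y hy).le zero_le_one
    linarith
  have heNe : ∀ x : X, ((fun y => min (ε y) 1 + dist x y) '' Ω).Nonempty :=
    fun x => ⟨_, ⟨x₀, hx₀, rfl⟩⟩
  have he_le : ∀ x ∈ Ω, e x ≤ min (ε x) 1 := by
    intro x hx
    have := csInf_le (heBdd x) ⟨x, hx, rfl⟩
    simpa using this
  have he_lip : ∀ x y : X, e x ≤ e y + dist x y := by
    intro x y
    have h1 : e x - dist x y ≤ e y := by
      refine le_csInf (heNe y) ?_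
      rintro z ⟨w, hw, rfl⟩
      have h2 : e x ≤ min (ε w) 1 + dist x w := csInf_le (heBdd x) ⟨w, hw, rfl⟩
      have h3 : dist x w ≤ dist x y + dist y w := dist_triangle x y w
      simp only []
      linarith
    linarith
  have he_pos : ∀ x ∈ Ω, 0 < e x := by
    intro x hx
    have hev : ∀ᶠ y in nhdsWithin x Ω, ε x / 2 < ε y :=
      (hεcont x hx).eventually (eventually_gt_nhds (half_lt_self (hεpos x hx)))
    obtain ⟨dd, hdd, hball⟩ := Metric.mem_nhdsWithin_iff.1 hev
    have hc : 0 < min dd (min (ε x / 2) 1) := by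
      have := hεpos x hx
      have := hdd
      positivity
    refine lt_of_lt_of_le hc (le_csInf (heNe x) ?_)
    rintro z ⟨y, hy, rfl⟩
    simp only []
    rcases lt_or_ge (dist y x) dd with hlt | hge
    · have hymem : y ∈ Metric.ball x dd ∩ Ω := ⟨by simpa [Metric.mem_ball] using hlt, hy⟩
      have h4 : ε x / 2 < ε y := hball hymem
      have h5 : min dd (min (ε x / 2) 1) ≤ min (ε y) 1 := by
        refine le_trans (min_le_right _ _) ?_
        exact min_le_min (le_of_lt h4) le_rfl
      have := dist_nonneg (x := x) (y := y)
      linarith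
    · have h6 : min dd (min (ε x / 2) 1) ≤ dd := min_le_left _ _
      have h7 : (0:ℝ) ≤ min (ε y) 1 := le_min (hεpos y hy).le zero_le_one
      rw [dist_comm] at hge
      linarith
  -- ### the exhausting family of sets
  set ρ : ℕ → ℝ := fun n => 1 / (2 * ((n:ℝ) + 1) * ((n:ℝ) + 2)) with hρdef
  have hρpos : ∀ n, 0 < ρ n := by
    intro n
    have : (0:ℝ) ≤ (n:ℝ) := Nat.cast_nonneg n
    rw [hρdef]; positivity
  have hρle1 : ∀ n, ρ n ≤ 1 := by
    intro n
    have hn : (0:ℝ) ≤ (n:ℝ) := Nat.cast_nonneg n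
    rw [hρdef, div_le_one (by positivity)]
    nlinarith
  have hρmono : ∀ n, ρ (n + 1) ≤ ρ n := by
    intro n
    have hn : (0:ℝ) ≤ (n:ℝ) := Nat.cast_nonneg n
    rw [hρdef]
    simp only [Nat.cast_add, Nat.cast_one]
    rw [div_le_div_iff₀ (by positivity) (by positivity)]
    nlinarith
  set Om : ℕ → Set X := fun n =>
    {x | ‖x‖ < (n:ℝ) ∧ closedBall x (1 / (n:ℝ)) ⊆ Ω ∧ 1 / (n:ℝ) < e x} with hOmdef
  have hOm0 : Om 0 = ∅ := by
    ext x
    simp only [hOmdef, Set.mem_setOf_eq, Set.mem_empty_iff_false, iff_false, not_and]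
    intro h
    exact absurd h (by simp [norm_nonneg])
  have hOmsubΩ : ∀ n, Om n ⊆ Ω := by
    intro n x hx
    exact hx.2.1 (mem_closedBall_self (by positivity))
  have hOmmono : ∀ m n : ℕ, m ≤ n → Om m ⊆ Om n := by
    have hstep : ∀ n, Om n ⊆ Om (n + 1) := by
      intro n
      rcases Nat.eq_zero_or_pos n with rfl | hn
      · rw [hOm0]; exact Set.empty_subset _
      intro x hx
      have hn' : (1:ℝ) ≤ (n:ℝ) := by exact_mod_cast hn
      have hinv : 1 / ((n:ℝ) + 1) ≤ 1 / (n:ℝ) := by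
        apply one_div_le_one_div_of_le <;> linarith
      refine ⟨?_, ?_, ?_⟩
      · push_cast; linarith [hx.1]
      · push_cast
        exact (closedBall_subset_closedBall hinv).trans hx.2.1
      · push_cast
        calc 1 / ((n:ℝ) + 1) ≤ 1 / (n:ℝ) := hinv
        _ < e x := hx.2.2
    exact fun m n h => monotone_nat_of_le_succ hstep h
  have hgap : ∀ n, ∀ x ∈ Om n, ∀ y : X, dist y x ≤ ρ n → y ∈ Om (n + 1) := by
    intro n x hx y hxy
    rcases Nat.eq_zero_or_pos n with rfl | hn
    · rw [hOm0] at hx; exact absurd hx (Set.notMem_empty x)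
    have hn' : (1:ℝ) ≤ (n:ℝ) := by exact_mod_cast hn
    have harr : 1 / ((n:ℝ) + 1) + ρ n ≤ 1 / (n:ℝ) := by
      rw [hρdef]
      rw [div_add_div _ _ (by positivity) (by positivity), div_le_div_iff₀ (by positivity) (by positivity)]
      nlinarith
    have hρn1 : ρ n ≤ 1 := hρle1 n
    obtain ⟨h1, h2, h3⟩ := hx
    refine ⟨?_, ?_, ?_⟩
    · push_cast
      have : ‖y‖ ≤ dist y x + ‖x‖ := by
        calc ‖y‖ = dist y 0 := (dist_zero_right y).symm
        _ ≤ dist y x + dist x 0 := dist_triangle y x 0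
        _ = dist y x + ‖x‖ := by rw [dist_zero_right]
      linarith
    · push_cast
      intro z hz
      refine h2 ?_
      rw [mem_closedBall] at hz ⊢
      calc dist z x ≤ dist z y + dist y x := dist_triangle z y x
      _ ≤ 1 / ((n:ℝ) + 1) + ρ n := add_le_add hz hxy
      _ ≤ 1 / (n:ℝ) := harr
    · push_cast
      have h4 : e x ≤ e y + dist x y := he_lip x y
      rw [dist_comm] at hxy
      have hρ0 := hρpos n
      linarith
  have hcover : ∀ x ∈ Ω, ∃ n : ℕ, x ∈ Om n := by
    intro x hx
    obtain ⟨r, hr, hrsub⟩ := Metric.isOpen_iff.1 hΩ x hx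
    obtain ⟨n₁, hn₁⟩ := exists_nat_gt ‖x‖
    obtain ⟨n₂, hn₂⟩ := exists_nat_one_div_lt
      (show 0 < min (r / 2) (e x) from lt_min (by linarith) (he_pos x hx))
    refine ⟨n₁ + n₂ + 1, ?_, ?_, ?_⟩
    · push_cast
      have : (0:ℝ) ≤ (n₂:ℝ) := Nat.cast_nonneg _
      linarith
    · intro z hz
      rw [mem_closedBall] at hz
      have hle : 1 / ((n₁:ℝ) + (n₂:ℝ) + 1) ≤ 1 / ((n₂:ℝ) + 1) := by
        apply one_div_le_one_div_of_le
        · positivity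
        · have : (0:ℝ) ≤ (n₁:ℝ) := Nat.cast_nonneg _
          linarith
      have h8 : 1 / ((n₂:ℝ) + 1) < min (r/2) (e x) := hn₂
      have h9 : min (r/2) (e x) ≤ r/2 := min_le_left _ _
      apply hrsub
      rw [Metric.mem_ball]
      push_cast at hz
      calc dist z x ≤ 1 / ((n₁:ℝ) + (n₂:ℝ) + 1) := hz
      _ ≤ 1 / ((n₂:ℝ) + 1) := hle
      _ < r / 2 := lt_of_lt_of_le h8 h9
      _ < r := by linarith
    · have hle : 1 / ((n₁:ℝ) + (n₂:ℝ) + 1) ≤ 1 / ((n₂:ℝ) + 1) := by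
        apply one_div_le_one_div_of_le
        · positivity
        · have : (0:ℝ) ≤ (n₁:ℝ) := Nat.cast_nonneg _
          linarith
      have h8 : 1 / ((n₂:ℝ) + 1) < min (r/2) (e x) := hn₂
      have h9 : min (r/2) (e x) ≤ e x := min_le_right _ _
      push_cast
      calc 1 / ((n₁:ℝ) + (n₂:ℝ) + 1) ≤ 1 / ((n₂:ℝ) + 1) := hle
      _ < e x := lt_of_lt_of_le h8 h9
  have hbddOm : ∀ n, Bornology.IsBounded (Om n) := by
    intro n
    refine (Metric.isBounded_ball (x := (0:X)) (r := (n:ℝ))).subset ?_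
    intro x hx
    exact mem_ball_zero_iff.2 hx.1
  have hcomplne : ∀ n : ℕ, ((Om n)ᶜ).Nonempty := by
    intro n
    obtain ⟨z, hz⟩ := exists_ne (0 : X)
    refine ⟨(((n:ℝ) + 1) / ‖z‖) • z, fun hmem => ?_⟩
    have hnz : ‖z‖ ≠ 0 := norm_ne_zero_iff.2 hz
    have : ‖(((n:ℝ) + 1) / ‖z‖) • z‖ = (n:ℝ) + 1 := by
      rw [norm_smul, Real.norm_eq_abs, abs_div, abs_of_nonneg (by positivity : (0:ℝ) ≤ (n:ℝ)+1),
        abs_of_nonneg (norm_nonneg z), div_mul_cancel₀]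
      exact hnz
    have h1 := hmem.1
    rw [this] at h1
    linarith
  -- ### the Lipschitz extension of u
  set F : X → ℝ := fun x => sInf ((fun y => u y + K * dist x y) '' Ω) with hFdef
  have hFBdd : ∀ x : X, BddBelow ((fun y => u y + K * dist x y) '' Ω) := by
    intro x
    refine ⟨u x₀ - K * dist x x₀, ?_⟩
    rintro z ⟨y, hy, rfl⟩
    have h1 := hu y hy x₀ hx₀
    have h2 : dist y x₀ ≤ dist y x + dist x x₀ := dist_triangle y x x₀
    have h3 := abs_le.1 h1
    have h4 : dist y x = dist x y := dist_comm y x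
    simp only []
    nlinarith [dist_nonneg (x := x) (y := y), dist_nonneg (x := x) (y := x₀)]
  have hFNe : ∀ x : X, ((fun y => u y + K * dist x y) '' Ω).Nonempty :=
    fun x => ⟨_, ⟨x₀, hx₀, rfl⟩⟩
  have hFeq : ∀ x ∈ Ω, F x = u x := by
    intro x hx
    refine le_antisymm ?_ (le_csInf (hFNe x) ?_)
    · have := csInf_le (hFBdd x) ⟨x, hx, rfl⟩
      simpa using this
    · rintro z ⟨y, hy, rfl⟩
      have h1 := abs_le.1 (hu x hx y hy)
      simp only []
      linarith [h1.1]
  have hFlip : ∀ x y : X, |F x - F y| ≤ K * dist x y := by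
    have key : ∀ x y : X, F x ≤ F y + K * dist x y := by
      intro x y
      have h1 : F x - K * dist x y ≤ F y := by
        refine le_csInf (hFNe y) ?_
        rintro z ⟨w, hw, rfl⟩
        have h2 : F x ≤ u w + K * dist x w := csInf_le (hFBdd x) ⟨w, hw, rfl⟩
        have h3 : dist x w ≤ dist x y + dist y w := dist_triangle x y w
        simp only []
        nlinarith
      linarith
    intro x y
    rw [abs_sub_le_iff]
    constructor
    · linarith [key x y]
    · rw [dist_comm]
      linarith [key y x]
  -- ### quantities
  set δ : ℕ → ℝ := fun n => K - lipOn u (Om (n + 2)) with hδdef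
  have hδpos : ∀ n, 0 < δ n := fun n => sub_pos.2 (hloc _ (hOmsubΩ _) (hbddOm _))
  have hδmono : ∀ m n : ℕ, m ≤ n → δ n ≤ δ m := by
    have hstep : ∀ n, δ (n + 1) ≤ δ n := by
      intro n
      rw [hδdef]
      simp only []
      have : lipOn u (Om (n + 2)) ≤ lipOn u (Om (n + 3)) := by
        refine lipOn_mono (hOmmono _ _ (by omega)) hK ?_
        exact fun a ha b hb => hu a (hOmsubΩ _ ha) b (hOmsubΩ _ hb)
      linarith
    exact fun m n h => antitone_nat_of_succ_le hstep h
  have hδleK : ∀ n, δ n ≤ K := by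
    intro n
    rw [hδdef]
    simp only []
    linarith [lipOn_nonneg u (Om (n + 2))]
  obtain ⟨Cσ, hCσ0, hCσ⟩ := exists_Csigma
  set C₁ : ℝ := 100 * (Cσ + 1) with hC₁def
  have hC₁pos : 0 < C₁ := by rw [hC₁def]; positivity
  have hC₁ge : (100:ℝ) ≤ C₁ := by rw [hC₁def]; nlinarith
  set η : ℕ → ℝ := fun n => min (1 / ((n:ℝ) + 1)) (min (ρ (n+1) / 2) (ρ n * δ (n+1) / C₁)) with hηdef
  have hηpos : ∀ n, 0 < η n := by
    intro n
    have h1 := hρpos (n+1)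
    have h2 := hρpos n
    have h3 := hδpos (n+1)
    have : (0:ℝ) ≤ (n:ℝ) := Nat.cast_nonneg n
    rw [hηdef]
    refine lt_min (by positivity) (lt_min (by positivity) (by positivity))
  have hη1 : ∀ n, η n ≤ 1 / ((n:ℝ) + 1) := fun n => min_le_left _ _
  have hη2 : ∀ n, η n ≤ ρ (n+1) / 2 := fun n => le_trans (min_le_right _ _) (min_le_left _ _)
  have hη3 : ∀ n, η n ≤ ρ n * δ (n+1) / C₁ := fun n => le_trans (min_le_right _ _) (min_le_right _ _)
  have hη4 : ∀ n, η n ≤ δ (n+1) / 100 := by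
    intro n
    refine le_trans (hη3 n) ?_
    rw [div_le_div_iff₀ hC₁pos (by norm_num)]
    have h1 := hρle1 n
    have h2 := (hδpos (n+1)).le
    have h3 := (hρpos n).le
    nlinarith
  -- ### the approximating functions
  choose g hg1 hg2 hg3 using fun n : ℕ => hX F ⟨K, fun x _ y _ => hFlip x y⟩ (η n) (hηpos n)
  have hinfdistlip : ∀ (S : Set X) (x y : X),
      |Metric.infDist x S - Metric.infDist y S| ≤ 1 * dist x y := by
    intro S x y
    rw [one_mul, abs_sub_le_iff]
    exact ⟨by linarith [Metric.infDist_le_infDist_add_dist (x := x) (y := y) (s := S)],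
      by rw [dist_comm]; linarith [Metric.infDist_le_infDist_add_dist (x := y) (y := x) (s := S)]⟩
  choose h hh1 hh2 hh3 using fun m : ℕ =>
    hX (fun x => Metric.infDist x ((Om (m+1))ᶜ)) ⟨1, fun x _ y _ => hinfdistlip _ x y⟩
      (ρ m / 8) (by have := hρpos m; positivity)
  -- ### derivative bounds
  have hDg : ∀ n, ∀ x ∈ Om (n+1), ‖fderiv ℝ (g n) x‖ ≤ K - δ n + η n := by
    intro n x hx
    have h1 := normFderiv_le hk (hηpos n) hK hFlip (hg1 n) (hg3 n) x (ρ (n+1) / 2)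
      (by have := hρpos (n+1); positivity)
    have hball : closedBall x (ρ (n+1) / 2 + η n) ⊆ Om (n+2) := by
      intro z hz
      rw [mem_closedBall] at hz
      exact hgap (n+1) x hx z (le_trans hz (by linarith [hη2 n]))
    have h2 : lipOn F (closedBall x (ρ (n+1) / 2 + η n))
        = lipOn u (closedBall x (ρ (n+1) / 2 + η n)) :=
      lipOn_congr (fun z hz => hFeq z (hOmsubΩ _ (hball hz)))
    have h3 : lipOn u (closedBall x (ρ (n+1) / 2 + η n)) ≤ lipOn u (Om (n+2)) :=
      lipOn_mono hball hK (fun a ha b hb => hu a (hOmsubΩ _ ha) b (hOmsubΩ _ hb))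
    have h4 : lipOn u (Om (n+2)) = K - δ n := by rw [hδdef]; ring
    rw [h2] at h1
    rw [h4] at h3
    linarith
  have hDh : ∀ m, ∀ x : X, ‖fderiv ℝ (h m) x‖ ≤ 2 := by
    intro m x
    have h1 := normFderiv_le hk (by have := hρpos m; positivity : 0 < ρ m / 8) one_pos
      (hinfdistlip ((Om (m+1))ᶜ)) (hh1 m) (hh3 m) x 1 one_pos
    have h2 : lipOn (fun x => Metric.infDist x ((Om (m+1))ᶜ)) (closedBall x (1 + ρ m / 8)) ≤ 1 :=
      lipOn_le one_pos (fun a _ b _ => hinfdistlip _ a b)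
    have h3 := hρle1 m
    linarith
  -- ### the cutoff functions
  set σ : ℝ → ℝ := Real.smoothTransition with hσdef
  set w : ℕ → X → ℝ := fun m y => (h m y - ρ m / 4) * (2 / ρ m) with hwdef
  set θ : ℕ → X → ℝ := fun m y => if m = 0 then 0 else σ (w m y) with hθdef
  have hθ0 : θ 0 = fun _ => (0:ℝ) := by funext y; simp [hθdef]
  have hθS : ∀ m : ℕ, θ (m+1) = fun y => σ (w (m+1) y) := by
    intro m; funext y; simp [hθdef]
  have hθnonneg : ∀ m y, 0 ≤ θ m y := by
    intro m y
    rcases m with _ | m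
    · rw [hθ0]
    · rw [hθS]; exact Real.smoothTransition.nonneg _
  have hθle1 : ∀ m y, θ m y ≤ 1 := by
    intro m y
    rcases m with _ | m
    · rw [hθ0]; norm_num
    · rw [hθS]; exact Real.smoothTransition.le_one _
  -- approximation quality of h m
  have hhapp : ∀ m (x : X), |Metric.infDist x ((Om (m+1))ᶜ) - h m x| ≤ ρ m / 8 := fun m x => hh2 m x
  -- distance lower bound inside Om m
  have hInfGe : ∀ m, ∀ x ∈ Om m, ρ m ≤ Metric.infDist x ((Om (m+1))ᶜ) := by
    intro m x hx
    by_contra hlt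
    push_neg at hlt
    obtain ⟨y, hy, hdy⟩ := (Metric.infDist_lt_iff (hcomplne (m+1))).1 hlt
    exact hy (hgap m x hx y (by rw [dist_comm]; exact hdy.le))
  -- θ m = 1 on Om m
  have hwge : ∀ m, ∀ x ∈ Om (m+1), 1 < w (m+1) x := by
    intro m x hx
    have h1 := hInfGe (m+1) x hx
    have h2 := abs_le.1 (hhapp (m+1) x)
    have hρ := hρpos (m+1)
    rw [hwdef]
    simp only []
    rw [show (1:ℝ) = (ρ (m+1) / 2) * (2 / ρ (m+1)) by field_simp]
    apply mul_lt_mul_of_pos_right _ (by positivity)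
    linarith
  have hθ_one : ∀ m, ∀ x ∈ Om m, θ m x = 1 := by
    intro m x hx
    rcases m with _ | m
    · rw [hOm0] at hx; exact absurd hx (Set.notMem_empty x)
    · rw [hθS]
      exact Real.smoothTransition.one_of_one_le (hwge m x hx).le
  -- θ m ≠ 0 forces membership in Om (m+1)
  have hθ_mem : ∀ m x, θ m x ≠ 0 → x ∈ Om (m+1) := by
    intro m x hne
    rcases m with _ | m
    · rw [hθ0] at hne; exact absurd rfl hne
    · rw [hθS] at hne
      have hρ := hρpos (m+1)
      have harg : 0 < w (m+1) x := by
        by_contra hle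
        push_neg at hle
        exact hne (Real.smoothTransition.zero_of_nonpos hle)
      have h5 : ρ (m+1) / 4 < h (m+1) x := by
        rw [hwdef] at harg
        simp only [] at harg
        by_contra hle'
        push_neg at hle'
        have hnp : (h (m+1) x - ρ (m+1) / 4) * (2 / ρ (m+1)) ≤ 0 :=
          mul_nonpos_iff.2 (Or.inr ⟨by linarith, by positivity⟩)
        linarith
      have h2 := abs_le.1 (hhapp (m+1) x)
      have h6 : 0 < Metric.infDist x ((Om (m+2))ᶜ) := by linarith
      by_contra hnot
      rw [← Metric.infDist_zero_of_mem (show x ∈ (Om (m+2))ᶜ from hnot)] at h6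
      exact lt_irrefl _ h6
  -- ### differentiability properties of the cutoffs
  have hσcd : ContDiff ℝ 1 σ := Real.smoothTransition.contDiff (n := 1)
  have hσd : Differentiable ℝ σ := hσcd.differentiable one_ne_zero
  have hhd : ∀ m, Differentiable ℝ (h m) := fun m => (hh1 m).differentiable (zero_lt_one.trans_le hk').ne'
  have hgd : ∀ n, Differentiable ℝ (g n) := fun n => (hg1 n).differentiable (zero_lt_one.trans_le hk').ne'
  have hwF : ∀ m (x : X), HasFDerivAt (w m) ((2 / ρ m) • fderiv ℝ (h m) x) x := by
    intro m x
    rw [hwdef]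
    exact ((hhd m x).hasFDerivAt.sub_const (ρ m / 4)).mul_const (2 / ρ m)
  have hθF : ∀ m (x : X),
      HasFDerivAt (θ m) (fderiv ℝ (θ m) x) x ∧ ‖fderiv ℝ (θ m) x‖ ≤ Cσ * (4 / ρ m) := by
    intro m x
    rcases m with _ | m
    · rw [hθ0]
      constructor
      · rw [show fderiv ℝ (fun _ : X => (0:ℝ)) x = 0 from fderiv_const_apply 0]
        exact hasFDerivAt_const 0 x
      · rw [show fderiv ℝ (fun _ : X => (0:ℝ)) x = 0 from fderiv_const_apply 0]
        have := hρpos 0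
        simp
        positivity
    · have hρ := hρpos (m+1)
      have hσA : HasDerivAt σ (deriv σ (w (m+1) x)) (w (m+1) x) := (hσd _).hasDerivAt
      have hcomp := hσA.comp_hasFDerivAt x (hwF (m+1) x)
      have hcomp' : HasFDerivAt (θ (m+1))
          (deriv σ (w (m+1) x) • (2 / ρ (m+1)) • fderiv ℝ (h (m+1)) x) x := by
        rw [hθS]
        exact hcomp
      constructor
      · rw [hcomp'.fderiv]
        exact hcomp'
      · rw [hcomp'.fderiv]
        rw [norm_smul, norm_smul]
        have hb := hDh (m+1) x
        have hd := hCσ (w (m+1) x)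
        have h2 : ‖(2 / ρ (m+1) : ℝ)‖ = 2 / ρ (m+1) := by
          rw [Real.norm_eq_abs, abs_of_pos (by positivity)]
        rw [h2, Real.norm_eq_abs]
        calc |deriv σ (w (m+1) x)| * (2 / ρ (m+1) * ‖fderiv ℝ (h (m+1)) x‖)
            ≤ Cσ * (2 / ρ (m+1) * 2) := by
              apply mul_le_mul hd _ (by positivity) hCσ0
              apply mul_le_mul_of_nonneg_left hb (by positivity)
        _ = Cσ * (4 / ρ (m+1)) := by ring
  have hθdiff : ∀ m (x : X), DifferentiableAt ℝ (θ m) x :=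
    fun m x => (hθF m x).1.differentiableAt
  have hTθ0 : ∀ x : X, fderiv ℝ (θ 0) x = 0 := by
    intro x
    rw [hθ0]
    exact fderiv_const_apply 0
  -- fderiv of θ m vanishes on Om m
  have hθf_mem : ∀ m, ∀ x ∈ Om m, fderiv ℝ (θ m) x = 0 := by
    intro m x hx
    rcases m with _ | m
    · exact hTθ0 x
    · have hopen : IsOpen {y : X | 1 < w (m+1) y} := by
        have hwc : Continuous (w (m+1)) := by
          rw [hwdef]
          exact (((hhd (m+1)).continuous).sub continuous_const).mul continuous_const
        exact isOpen_lt continuous_const hwc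
      have hev : θ (m+1) =ᶠ[nhds x] (fun _ => (1:ℝ)) := by
        filter_upwards [hopen.mem_nhds (hwge m x hx)] with y hy
        rw [hθS]
        exact Real.smoothTransition.one_of_one_le (le_of_lt hy)
      rw [hev.fderiv_eq, fderiv_const_apply]
  have hθf_notmem : ∀ m x, x ∉ Om (m+1) → fderiv ℝ (θ m) x = 0 := by
    intro m x hx
    rcases m with _ | m
    · exact hTθ0 x
    · have hρ := hρpos (m+1)
      have hopen : IsOpen {y : X | w (m+1) y < 0} := by
        have hwc : Continuous (w (m+1)) := by
          rw [hwdef]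
          exact (((hhd (m+1)).continuous).sub continuous_const).mul continuous_const
        exact isOpen_lt hwc continuous_const
      have hxmem : w (m+1) x < 0 := by
        have h0 : Metric.infDist x ((Om (m+2))ᶜ) = 0 :=
          Metric.infDist_zero_of_mem (show x ∈ (Om (m+2))ᶜ from hx)
        have h2 := abs_le.1 (hhapp (m+1) x)
        rw [h0] at h2
        have h3 : h (m+1) x - ρ (m+1) / 4 ≤ -(ρ (m+1) / 8) := by linarith [h2.2]
        rw [hwdef]
        simp only []
        have : h (m+1) x - ρ (m+1) / 4 < 0 := by linarith
        exact mul_neg_of_neg_of_pos this (by positivity)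
      have hev : θ (m+1) =ᶠ[nhds x] (fun _ => (0:ℝ)) := by
        filter_upwards [hopen.mem_nhds hxmem] with y hy
        rw [hθS]
        exact Real.smoothTransition.zero_of_nonpos (le_of_lt hy)
      rw [hev.fderiv_eq, fderiv_const_apply]
  -- ### the partition functions and partial sums
  set ψ : ℕ → X → ℝ := fun n y => θ n y - θ (n-1) y with hψdef
  set Sf : ℕ → X → ℝ := fun N y => ∑ n ∈ Finset.range (N+1), ψ n y * g n y with hSdef
  have hψ0 : ∀ y, ψ 0 y = 0 := by intro y; rw [hψdef]; simp
  have hψnonneg : ∀ n y, 0 ≤ ψ n y := by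
    intro n y
    rcases n with _ | m
    · rw [hψ0]
    · rw [hψdef]
      simp only [Nat.add_sub_cancel]
      rcases eq_or_ne (θ m y) 0 with h0 | h0
      · rw [h0]; simpa using hθnonneg (m+1) y
      · have h1 : y ∈ Om (m+1) := hθ_mem m y h0
        rw [hθ_one (m+1) y h1]
        linarith [hθle1 m y]
  have hψsum : ∀ N y, ∑ n ∈ Finset.range (N+1), ψ n y = θ N y := by
    intro N y
    induction N with
    | zero => simp [hψ0 y, hθ0]
    | succ N ih =>
        rw [Finset.sum_range_succ, ih, hψdef]
        simp only [Nat.add_sub_cancel]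
        ring
  have hθ_up : ∀ m y, θ m y = 1 → ∀ n, m ≤ n → θ n y = 1 := by
    intro m y hm n hmn
    induction n, hmn using Nat.le_induction with
    | base => exact hm
    | succ n hmn ih =>
        exact hθ_one (n+1) y (hθ_mem n y (by rw [ih]; exact one_ne_zero))
  have hstab : ∀ m M y, m ≤ M → θ m y = 1 → Sf M y = Sf m y := by
    intro m M y hmM h1
    rw [hSdef]
    simp only []
    rw [Finset.range_eq_Ico, ← Finset.sum_Ico_consecutive _ (Nat.zero_le (m+1)) (by omega : m+1 ≤ M+1)]
    have hz : ∑ n ∈ Finset.Ico (m+1) (M+1), ψ n y * g n y = 0 := by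
      refine Finset.sum_eq_zero ?_
      intro n hn
      rw [Finset.mem_Ico] at hn
      have h2 : θ n y = 1 := hθ_up m y h1 n (by omega)
      have h3 : θ (n-1) y = 1 := hθ_up m y h1 (n-1) (by omega)
      rw [hψdef]
      simp only []
      rw [h2, h3]
      ring
    rw [hz, add_zero, Finset.range_eq_Ico]
  -- ### definition of v
  set v : X → ℝ := fun x => if hx : x ∈ Ω then Sf (Nat.find (hcover x hx)) x else 0 with hvdef
  -- the neighborhood on which v coincides with a partial sum
  have hkey : ∀ x (hx : x ∈ Ω), ∃ U : Set X, IsOpen U ∧ x ∈ U ∧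
      (∀ y ∈ U, v y = Sf (Nat.find (hcover x hx)) y) := by
    intro x hx
    have hN : x ∈ Om (Nat.find (hcover x hx)) := Nat.find_spec (hcover x hx)
    have hN1 : 1 ≤ Nat.find (hcover x hx) := by
      rcases Nat.eq_zero_or_pos (Nat.find (hcover x hx)) with h0 | h
      · rw [h0, hOm0] at hN; exact absurd hN (Set.notMem_empty x)
      · exact h
    obtain ⟨M, hM⟩ : ∃ M, Nat.find (hcover x hx) = M + 1 := ⟨Nat.find (hcover x hx) - 1, by omega⟩
    rw [hM] at hN
    simp only [hM]
    refine ⟨{y : X | 1 < w (M+1) y}, ?_, hwge M x hN, ?_⟩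
    · have hwc : Continuous (w (M+1)) := by
        rw [hwdef]
        exact (((hhd (M+1)).continuous).sub continuous_const).mul continuous_const
      exact isOpen_lt continuous_const hwc
    · intro y hy
      have hθy : θ (M+1) y = 1 := by
        rw [hθS]
        exact Real.smoothTransition.one_of_one_le (le_of_lt hy)
      -- y is in Ω
      have hyOm : y ∈ Om (M+2) := hθ_mem (M+1) y (by rw [hθy]; exact one_ne_zero)
      have hyΩ : y ∈ Ω := hOmsubΩ _ hyOm
      rw [hvdef]
      simp only []
      rw [dif_pos hyΩ]
      set M' := Nat.find (hcover y hyΩ) with hM'def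
      have hM' : y ∈ Om M' := Nat.find_spec (hcover y hyΩ)
      have hθy' : θ M' y = 1 := hθ_one M' y hM'
      rcases le_total M' (M+1) with hle | hle
      · rw [hstab M' (M+1) y hle hθy']
      · rw [hstab (M+1) M' y hle hθy]
  -- smoothness of the partial sums
  have hθcd : ∀ m, ContDiff ℝ k (θ m) := by
    intro m
    rcases m with _ | m
    · rw [hθ0]; exact contDiff_const
    · rw [hθS]
      refine (Real.smoothTransition.contDiff (n := k)).comp ?_
      rw [hwdef]
      exact ((hh1 (m+1)).sub contDiff_const).mul contDiff_const
  have hScd : ∀ N, ContDiff ℝ k (Sf N) := by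
    intro N
    rw [hSdef]
    refine ContDiff.sum ?_
    intro i _
    refine ContDiff.mul ?_ (hg1 i)
    rw [hψdef]
    exact (hθcd i).sub (hθcd (i-1))
  refine ⟨v, ?_, ?_, ?_⟩
  · -- ### smoothness of v
    intro x hx
    obtain ⟨U, hUopen, hxU, hUeq⟩ := hkey x hx
    have hev : v =ᶠ[nhds x] Sf (Nat.find (hcover x hx)) :=
      Filter.eventuallyEq_of_mem (hUopen.mem_nhds hxU) hUeq
    exact (((hScd _).contDiffAt).congr_of_eventuallyEq hev).contDiffWithinAt
  · -- ### the approximation estimate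
    intro x hx
    obtain ⟨U, hUopen, hxU, hUeq⟩ := hkey x hx
    rw [hUeq x hxU]
    set N := Nat.find (hcover x hx) with hNdef
    have hN : x ∈ Om N := Nat.find_spec (hcover x hx)
    have hθN : θ N x = 1 := hθ_one N x hN
    have hrepr : u x - Sf N x = ∑ n ∈ Finset.range (N+1), ψ n x * (u x - g n x) := by
      have h1 : ∑ n ∈ Finset.range (N+1), ψ n x * (u x - g n x)
          = (∑ n ∈ Finset.range (N+1), ψ n x) * u x - ∑ n ∈ Finset.range (N+1), ψ n x * g n x := by
        rw [Finset.sum_mul, ← Finset.sum_sub_distrib]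
        congr 1
        ext n
        ring
      rw [h1, hψsum, hθN, one_mul, hSdef]
    have hterm : ∀ n ∈ Finset.range (N+1), ψ n x * (u x - g n x) ≤ ψ n x * e x ∧
        -(ψ n x * e x) ≤ ψ n x * (u x - g n x) := by
      intro n _
      rcases eq_or_ne (ψ n x) 0 with h0 | h0
      · rw [h0]; norm_num
      · have hψpos : 0 < ψ n x := lt_of_le_of_ne (hψnonneg n x) (Ne.symm h0)
        have hθne : θ n x ≠ 0 := by
          intro hc
          rw [hψdef] at hψpos
          simp only [] at hψpos
          rw [hc] at hψpos
          linarith [hθnonneg (n-1) x]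
        have hmem : x ∈ Om (n+1) := hθ_mem n x hθne
        have hlt : 1 / ((n:ℝ) + 1) < e x := by
          have := hmem.2.2
          push_cast at this
          exact this
        have happ : |u x - g n x| ≤ η n := by
          rw [← hFeq x hx]
          exact hg2 n x
        have habs : |u x - g n x| ≤ e x := le_trans happ (le_trans (hη1 n) hlt.le)
        have h5 := abs_le.1 habs
        constructor
        · exact mul_le_mul_of_nonneg_left h5.2 hψpos.le
        · have := mul_le_mul_of_nonneg_left h5.1 hψpos.le
          calc -(ψ n x * e x) = ψ n x * (-(e x)) := by ring
          _ ≤ ψ n x * (u x - g n x) := this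
    calc |u x - Sf N x| = |∑ n ∈ Finset.range (N+1), ψ n x * (u x - g n x)| := by rw [hrepr]
    _ ≤ ∑ n ∈ Finset.range (N+1), ψ n x * e x := by
        rw [abs_le]
        constructor
        · rw [← Finset.sum_neg_distrib]
          exact Finset.sum_le_sum (fun n hn => (hterm n hn).2)
        · exact Finset.sum_le_sum (fun n hn => (hterm n hn).1)
    _ = (∑ n ∈ Finset.range (N+1), ψ n x) * e x := by rw [Finset.sum_mul]
    _ = e x := by rw [hψsum, hθN, one_mul]
    _ ≤ min (ε x) 1 := he_le x hx
    _ ≤ ε x := min_le_left _ _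
  · -- ### the derivative estimate
    intro x hx
    obtain ⟨U, hUopen, hxU, hUeq⟩ := hkey x hx
    set N := Nat.find (hcover x hx) with hNdef
    have hN : x ∈ Om N := Nat.find_spec (hcover x hx)
    have hNmin : ∀ m, m < N → x ∉ Om m := fun m hm => Nat.find_min (hcover x hx) hm
    have hN1 : 1 ≤ N := by
      rcases Nat.eq_zero_or_pos N with h0 | hpos
      · rw [h0, hOm0] at hN; exact absurd hN (Set.notMem_empty x)
      · exact hpos
    have hθN : θ N x = 1 := hθ_one N x hN
    clear_value N v Sf ψ θ w η C₁ δ ρ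
    -- the only cutoff whose derivative survives at x
    have hTonly : ∀ m, m ≠ N - 1 → fderiv ℝ (θ m) x = 0 := by
      intro m hm
      rcases lt_or_ge m N with hlt | hle
      · exact hθf_notmem m x (hNmin (m+1) (by omega))
      · exact hθf_mem m x (hOmmono N m hle hN)
    -- the derivative of the partial sum
    have hSF : HasFDerivAt (Sf N) (∑ n ∈ Finset.range (N+1),
        (ψ n x • fderiv ℝ (g n) x +
          g n x • (fderiv ℝ (θ n) x - fderiv ℝ (θ (n-1)) x))) x := by
      rw [hSdef]
      refine HasFDerivAt.fun_sum ?_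
      intro i _
      have hψF : HasFDerivAt (fun y => ψ i y)
          (fderiv ℝ (θ i) x - fderiv ℝ (θ (i-1)) x) x := by
        rw [hψdef]
        exact ((hθF i x).1).sub ((hθF (i-1) x).1)
      exact hψF.mul ((hgd i x).hasFDerivAt)
    have hfv : fderiv ℝ v x = ∑ n ∈ Finset.range (N+1),
        (ψ n x • fderiv ℝ (g n) x +
          g n x • (fderiv ℝ (θ n) x - fderiv ℝ (θ (n-1)) x)) := by
      have hev : v =ᶠ[nhds x] Sf N :=
        Filter.eventuallyEq_of_mem (hUopen.mem_nhds hxU) hUeq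
      rw [hev.fderiv_eq, hSF.fderiv]
    rw [hfv, Finset.sum_add_distrib]
    -- ## part A
    have hMnn : (0:ℝ) ≤ K - 99/100 * δ N := by
      have := hδleK N
      have := hδpos N
      linarith
    have hA : ‖∑ n ∈ Finset.range (N+1), ψ n x • fderiv ℝ (g n) x‖ ≤ K - 99/100 * δ N := by
      calc ‖∑ n ∈ Finset.range (N+1), ψ n x • fderiv ℝ (g n) x‖
          ≤ ∑ n ∈ Finset.range (N+1), ‖ψ n x • fderiv ℝ (g n) x‖ := norm_sum_le _ _
      _ ≤ ∑ n ∈ Finset.range (N+1), ψ n x * (K - 99/100 * δ N) := by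
          refine Finset.sum_le_sum ?_
          intro n _
          rw [norm_smul, Real.norm_eq_abs, abs_of_nonneg (hψnonneg n x)]
          rcases eq_or_ne (ψ n x) 0 with h0 | h0
          · rw [h0]; norm_num
          · have hψpos : 0 < ψ n x := lt_of_le_of_ne (hψnonneg n x) (Ne.symm h0)
            have hθne : θ n x ≠ 0 := by
              intro hc
              rw [hψdef] at hψpos
              simp only [] at hψpos
              rw [hc] at hψpos
              linarith [hθnonneg (n-1) x]
            have hmem : x ∈ Om (n+1) := hθ_mem n x hθne
            have hnN : n ≤ N := by
              by_contra hgt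
              push_neg at hgt
              have h1 : θ (n-1) x = 1 := hθ_one (n-1) x (hOmmono N (n-1) (by omega) hN)
              have h2 := hθle1 n x
              rw [hψdef] at hψpos
              simp only [] at hψpos
              rw [h1] at hψpos
              linarith
            have hb := hDg n x hmem
            have hδn : δ N ≤ δ n := hδmono n N hnN
            have hηn : η n ≤ δ n / 100 :=
              le_trans (hη4 n) (by linarith [hδmono n (n+1) (by omega)])
            have hDgn : ‖fderiv ℝ (g n) x‖ ≤ K - 99/100 * δ N := by linarith
            exact mul_le_mul_of_nonneg_left hDgn (hψnonneg n x)
      _ = (∑ n ∈ Finset.range (N+1), ψ n x) * (K - 99/100 * δ N) := by rw [Finset.sum_mul]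
      _ = K - 99/100 * δ N := by rw [hψsum, hθN, one_mul]
    -- ## part B
    have htel : ∀ M : ℕ, ∑ n ∈ Finset.range (M+1),
        (fderiv ℝ (θ n) x - fderiv ℝ (θ (n-1)) x) = fderiv ℝ (θ M) x := by
      intro M
      induction M with
      | zero => simp [hTθ0 x]
      | succ M ih =>
          rw [Finset.sum_range_succ, ih]
          simp only [Nat.add_sub_cancel]
          abel
    have ha : ∀ n, |g n x - u x| ≤ η n := by
      intro n
      rw [abs_sub_comm, ← hFeq x hx]
      exact hg2 n x
    have hsplit : ∑ n ∈ Finset.range (N+1),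
          g n x • (fderiv ℝ (θ n) x - fderiv ℝ (θ (n-1)) x)
        = ∑ n ∈ Finset.range (N+1),
          (g n x - u x) • (fderiv ℝ (θ n) x - fderiv ℝ (θ (n-1)) x) := by
      have h2 : ∑ n ∈ Finset.range (N+1),
          (u x) • (fderiv ℝ (θ n) x - fderiv ℝ (θ (n-1)) x) = 0 := by
        rw [← Finset.smul_sum, htel N, hθf_mem N x hN, smul_zero]
      calc ∑ n ∈ Finset.range (N+1), g n x • (fderiv ℝ (θ n) x - fderiv ℝ (θ (n-1)) x)
          = ∑ n ∈ Finset.range (N+1),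
            ((g n x - u x) • (fderiv ℝ (θ n) x - fderiv ℝ (θ (n-1)) x)
              + (u x) • (fderiv ℝ (θ n) x - fderiv ℝ (θ (n-1)) x)) := by
            congr 1
            ext n
            rw [← add_smul]
            ring_nf
      _ = _ := by rw [Finset.sum_add_distrib, h2, add_zero]
    have hsum1 : ∑ n ∈ Finset.range (N+1), (g n x - u x) • fderiv ℝ (θ n) x
        = (g (N-1) x - u x) • fderiv ℝ (θ (N-1)) x := by
      refine Finset.sum_eq_single_of_mem (N-1) (Finset.mem_range.2 (by omega)) ?_
      intro n _ hne
      rw [hTonly n hne, smul_zero]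
    have hsum2 : ∑ n ∈ Finset.range (N+1), (g n x - u x) • fderiv ℝ (θ (n-1)) x
        = (g N x - u x) • fderiv ℝ (θ (N-1)) x := by
      refine Finset.sum_eq_single_of_mem N (Finset.mem_range.2 (by omega)) ?_
      intro n hn hne
      have hz : fderiv ℝ (θ (n-1)) x = 0 := by
        rcases Nat.eq_zero_or_pos n with rfl | hnpos
        · exact hTθ0 x
        · refine hTonly (n-1) ?_
          have hnN : n < N + 1 := Finset.mem_range.1 hn
          omega
      rw [hz, smul_zero]
    have hB : ‖∑ n ∈ Finset.range (N+1),
        g n x • (fderiv ℝ (θ n) x - fderiv ℝ (θ (n-1)) x)‖ ≤ 2/25 * δ N := by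
      rw [hsplit]
      have hBex : ∑ n ∈ Finset.range (N+1),
          (g n x - u x) • (fderiv ℝ (θ n) x - fderiv ℝ (θ (n-1)) x)
          = ((g (N-1) x - u x) - (g N x - u x)) • fderiv ℝ (θ (N-1)) x := by
        have hdist : ∀ n, (g n x - u x) • (fderiv ℝ (θ n) x - fderiv ℝ (θ (n-1)) x)
            = (g n x - u x) • fderiv ℝ (θ n) x - (g n x - u x) • fderiv ℝ (θ (n-1)) x :=
          fun n => smul_sub _ _ _
        calc ∑ n ∈ Finset.range (N+1),
            (g n x - u x) • (fderiv ℝ (θ n) x - fderiv ℝ (θ (n-1)) x)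
            = ∑ n ∈ Finset.range (N+1), ((g n x - u x) • fderiv ℝ (θ n) x
              - (g n x - u x) • fderiv ℝ (θ (n-1)) x) :=
              Finset.sum_congr rfl (fun n _ => hdist n)
        _ = (∑ n ∈ Finset.range (N+1), (g n x - u x) • fderiv ℝ (θ n) x)
            - ∑ n ∈ Finset.range (N+1), (g n x - u x) • fderiv ℝ (θ (n-1)) x :=
            Finset.sum_sub_distrib _ _
        _ = _ := by rw [hsum1, hsum2, ← sub_smul]
      rw [hBex]
      have hTb := (hθF (N-1) x).2
      have ha1 := abs_le.1 (ha (N-1))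
      have ha2 := abs_le.1 (ha N)
      have habs : |(g (N-1) x - u x) - (g N x - u x)| ≤ η (N-1) + η N :=
        abs_le.2 ⟨by linarith, by linarith⟩
      have hρN := hρpos (N-1)
      have hηnn1 := (hηpos (N-1)).le
      have hηnn2 := (hηpos N).le
      calc ‖((g (N-1) x - u x) - (g N x - u x)) • fderiv ℝ (θ (N-1)) x‖
          = |(g (N-1) x - u x) - (g N x - u x)| * ‖fderiv ℝ (θ (N-1)) x‖ := by
            rw [norm_smul, Real.norm_eq_abs]
      _ ≤ (η (N-1) + η N) * (Cσ * (4 / ρ (N-1))) := by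
          apply mul_le_mul habs hTb (norm_nonneg _) (by linarith)
      _ ≤ 2/25 * δ N := by
          have e1 : η (N-1) ≤ ρ (N-1) * δ N / C₁ := by
            have := hη3 (N-1)
            rwa [show N-1+1 = N by omega] at this
          have e2 : η N ≤ ρ (N-1) * δ N / C₁ := by
            refine le_trans (hη3 N) ?_
            have h1 : ρ N ≤ ρ (N-1) := by
              have := hρmono (N-1)
              rwa [show N-1+1 = N by omega] at this
            have h2 : δ (N+1) ≤ δ N := hδmono N (N+1) (by omega)
            exact (div_le_div_iff_of_pos_right hC₁pos).2
              (mul_le_mul h1 h2 (hδpos (N+1)).le (hρpos (N-1)).le)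
          have hq : (η (N-1) + η N) * (Cσ * (4 / ρ (N-1)))
              ≤ (2 * (ρ (N-1) * δ N / C₁)) * (Cσ * (4 / ρ (N-1))) := by
            apply mul_le_mul_of_nonneg_right (by linarith)
            positivity
          have heq : (2 * (ρ (N-1) * δ N / C₁)) * (Cσ * (4 / ρ (N-1)))
              = 8 * Cσ * δ N / C₁ := by
            field_simp
            ring
          have hfin : 8 * Cσ * δ N / C₁ ≤ 2/25 * δ N := by
            rw [div_le_iff₀ hC₁pos, hC₁def]
            nlinarith [(hδpos N).le, hCσ0, mul_nonneg (hδpos N).le hCσ0]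
          linarith
    calc ‖(∑ n ∈ Finset.range (N+1), ψ n x • fderiv ℝ (g n) x) +
        ∑ n ∈ Finset.range (N+1), g n x • (fderiv ℝ (θ n) x - fderiv ℝ (θ (n-1)) x)‖
        ≤ ‖∑ n ∈ Finset.range (N+1), ψ n x • fderiv ℝ (g n) x‖ +
          ‖∑ n ∈ Finset.range (N+1), g n x • (fderiv ℝ (θ n) x - fderiv ℝ (θ (n-1)) x)‖ :=
          norm_add_le _ _
    _ ≤ (K - 99/100 * δ N) + 2/25 * δ N := add_le_add hA hB
    _ < K := by linarith [hδpos N]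
end

section
/- Let X be a Banach space, let Ω ⊂ X be open, and let K ≥ 0. If w : cl(Ω) → ℝ is continuous on cl(Ω), is Fréchet differentiable at every point of Ω, is K-Lipschitz on ∂Ω, and satisfies ‖Dw(x)‖_* ≤ K for every x ∈ Ω, then w is K-Lipschitz on cl(Ω). -/
open Metric Set MeasureTheory

open Filter in
lemma aux_seg {X : Type*} [NormedAddCommGroup X] [NormedSpace ℝ X]
    (Ω : Set X) (K : ℝ) (hK : 0 ≤ K) (w : X → ℝ)
    (hcont : ContinuousOn w (closure Ω))
    (hdiff : ∀ x ∈ Ω, DifferentiableAt ℝ w x)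
    (hder : ∀ x ∈ Ω, ‖fderiv ℝ w x‖ ≤ K)
    (x y : X) (hx : x ∈ closure Ω) (hy : y ∈ closure Ω)
    (hseg : ∀ t : ℝ, t ∈ Ioo (0:ℝ) 1 → x + t • (y - x) ∈ Ω) :
    |w x - w y| ≤ K * dist x y := by
  set v := y - x with hv
  set γ : ℝ → X := fun t => x + t • v with hγ
  have hγcont : Continuous γ := by continuity
  have hsub : (fun θ : ℝ => x + θ • (y - x)) '' Ioo (0:ℝ) 1 ⊆ Ω := by
    rintro _ ⟨t, ht, rfl⟩; exact hseg t ht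
  rw [← openSegment_eq_image'] at hsub
  have key : ∀ s ∈ Ioo (0:ℝ) 1, ∀ t ∈ Ioo (0:ℝ) 1,
      |w (γ s) - w (γ t)| ≤ K * (|s - t| * ‖v‖) := by
    intro s hs t ht
    have hsm : γ s ∈ openSegment ℝ x y := by
      rw [openSegment_eq_image']; exact ⟨s, hs, rfl⟩
    have htm : γ t ∈ openSegment ℝ x y := by
      rw [openSegment_eq_image']; exact ⟨t, ht, rfl⟩
    have := (convex_openSegment x y).norm_image_sub_le_of_norm_fderiv_le
      (fun z hz => hdiff z (hsub hz)) (fun z hz => hder z (hsub hz)) htm hsm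
    rw [Real.norm_eq_abs] at this
    have heq : γ s - γ t = (s - t) • v := by simp [hγ, sub_smul]
    calc |w (γ s) - w (γ t)| ≤ K * ‖γ s - γ t‖ := this
    _ = K * (|s - t| * ‖v‖) := by rw [heq, norm_smul, Real.norm_eq_abs]
  -- limits
  have h0 : Tendsto (fun s : ℝ => w (γ s)) (nhdsWithin 0 (Ioi 0)) (nhds (w x)) := by
    apply (hcont x hx).tendsto.comp
    rw [tendsto_nhdsWithin_iff]
    constructor
    · have : Tendsto γ (nhdsWithin 0 (Ioi 0)) (nhds (γ 0)) :=
        (hγcont.tendsto 0).mono_left nhdsWithin_le_nhds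
      simpa [hγ] using this
    · filter_upwards [Ioo_mem_nhdsGT_of_mem (by norm_num : (0:ℝ) ∈ Ico (0:ℝ) 1)] with s hs
      exact subset_closure (hseg s hs)
  have h1 : Tendsto (fun s : ℝ => w (γ (1 - s))) (nhdsWithin 0 (Ioi 0)) (nhds (w y)) := by
    apply (hcont y hy).tendsto.comp
    rw [tendsto_nhdsWithin_iff]
    constructor
    · have hc : Tendsto (fun s : ℝ => γ (1 - s)) (nhdsWithin 0 (Ioi 0)) (nhds (γ 1)) := by
        apply Tendsto.mono_left _ nhdsWithin_le_nhds
        exact (hγcont.tendsto 1).comp (by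
          have : Tendsto (fun s : ℝ => 1 - s) (nhds 0) (nhds (1 - 0)) :=
            tendsto_const_nhds.sub tendsto_id
          simpa using this)
      have : γ 1 = y := by simp [hγ, hv]
      rwa [this] at hc
    · filter_upwards [Ioo_mem_nhdsGT_of_mem (by norm_num : (0:ℝ) ∈ Ico (0:ℝ) 1)] with s hs
      have : (1 - s) ∈ Ioo (0:ℝ) 1 := ⟨by linarith [hs.2], by linarith [hs.1]⟩
      exact subset_closure (hseg _ this)
  have hlim : Tendsto (fun s : ℝ => |w (γ s) - w (γ (1 - s))|)
      (nhdsWithin 0 (Ioi 0)) (nhds (|w x - w y|)) :=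
    ((h0.sub h1).abs)
  have hbound : ∀ᶠ s in nhdsWithin (0:ℝ) (Ioi 0),
      |w (γ s) - w (γ (1 - s))| ≤ K * ‖v‖ := by
    filter_upwards [Ioo_mem_nhdsGT_of_mem
      (by norm_num : (0:ℝ) ∈ Ico (0:ℝ) (1/2))] with s hs
    have hs1 : s ∈ Ioo (0:ℝ) 1 := ⟨hs.1, by linarith [hs.2]⟩
    have hs2 : (1 - s) ∈ Ioo (0:ℝ) 1 := ⟨by linarith [hs1.2], by linarith [hs.1]⟩
    refine (key s hs1 _ hs2).trans ?_
    have : |s - (1 - s)| ≤ 1 := by rw [abs_le]; constructor <;> linarith [hs.1, hs.2]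
    have h2 : |s - (1 - s)| * ‖v‖ ≤ 1 * ‖v‖ :=
      mul_le_mul_of_nonneg_right this (norm_nonneg v)
    nlinarith [norm_nonneg v]
  have := le_of_tendsto hlim hbound
  rwa [dist_eq_norm', ← hv]

/-- Fact: a function continuous on `cl(Ω)`, differentiable on `Ω` with `‖Dw‖_* ≤ K` there,
and `K`-Lipschitz on `∂Ω`, is `K`-Lipschitz on `cl(Ω)`. -/
theorem stmt_10 {X : Type*} [NormedAddCommGroup X] [NormedSpace ℝ X] [CompleteSpace X]
    (Ω : Set X) (hΩ : IsOpen Ω) (K : ℝ) (hK : 0 ≤ K) (w : X → ℝ)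
    (hcont : ContinuousOn w (closure Ω))
    (hdiff : ∀ x ∈ Ω, DifferentiableAt ℝ w x)
    (hbd : IsLipschitzWithOn K w (frontier Ω))
    (hder : ∀ x ∈ Ω, ‖fderiv ℝ w x‖ ≤ K) :
    IsLipschitzWithOn K w (closure Ω) := by
  intro x hx y hy
  set v := y - x with hv
  set γ : ℝ → X := fun t => x + t • v with hγ
  have hγ0 : γ 0 = x := by simp [hγ]
  have hγ1 : γ 1 = y := by simp [hγ, hv]
  have hγcont : Continuous γ := by continuity
  set T : Set ℝ := {t ∈ Icc (0:ℝ) 1 | γ t ∉ Ω} with hT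
  by_cases hTne : T = ∅
  · -- whole open segment in Ω
    apply aux_seg Ω K hK w hcont hdiff hder x y hx hy
    intro t ht
    by_contra hc
    have : t ∈ T := ⟨⟨le_of_lt ht.1, le_of_lt ht.2⟩, hc⟩
    rw [hTne] at this; exact this
  · have hTne' : T.Nonempty := Set.nonempty_iff_ne_empty.mpr hTne
    have hTcl : IsClosed T := by
      have : T = Icc (0:ℝ) 1 ∩ γ ⁻¹' Ωᶜ := by
        ext t; simp [hT, Set.mem_sep_iff]
      rw [this]
      exact isClosed_Icc.inter (hΩ.isClosed_compl.preimage hγcont)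
    have hTbdd : BddBelow T := ⟨0, fun t ht => ht.1.1⟩
    have hTbdd' : BddAbove T := ⟨1, fun t ht => ht.1.2⟩
    set a := sInf T with ha
    set b := sSup T with hb
    have haT : a ∈ T := hTcl.csInf_mem hTne' hTbdd
    have hbT : b ∈ T := hTcl.csSup_mem hTne' hTbdd'
    have hab : a ≤ b := csInf_le_csSup hTne' hTbdd hTbdd'
    have ha0 : 0 ≤ a := haT.1.1
    have hb1 : b ≤ 1 := hbT.1.2
    -- points before a are in Ω
    have hbefore : ∀ s ∈ Ioo (0:ℝ) a, γ s ∈ Ω := by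
      intro s hs
      by_contra hc
      have : s ∈ T := ⟨⟨le_of_lt hs.1, le_trans (le_of_lt hs.2) (le_trans hab hb1)⟩, hc⟩
      exact absurd (csInf_le hTbdd this) (not_le.mpr hs.2)
    have hafter : ∀ s ∈ Ioo b (1:ℝ), γ s ∈ Ω := by
      intro s hs
      by_contra hc
      have : s ∈ T := ⟨⟨le_trans (le_trans ha0 hab) (le_of_lt hs.1), le_of_lt hs.2⟩, hc⟩
      exact absurd (le_csSup hTbdd' this) (not_le.mpr hs.1)
    -- γ a, γ b in closure Ω
    have hγa_cl : γ a ∈ closure Ω := by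
      rcases eq_or_lt_of_le ha0 with h | h
      · rw [← h, hγ0]; exact hx
      · have hac : a ∈ closure (Ioo (0:ℝ) a) := by
          rw [closure_Ioo (ne_of_lt h)]; exact ⟨le_of_lt h, le_refl a⟩
        exact map_mem_closure hγcont hac (fun s hs => hbefore s hs)
    have hγb_cl : γ b ∈ closure Ω := by
      rcases eq_or_lt_of_le hb1 with h | h
      · rw [h, hγ1]; exact hy
      · have hbc : b ∈ closure (Ioo b (1:ℝ)) := by
          rw [closure_Ioo (ne_of_lt h)]; exact ⟨le_refl b, le_of_lt h⟩
        exact map_mem_closure hγcont hbc (fun s hs => hafter s hs)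
    have hγa_fr : γ a ∈ frontier Ω := by
      rw [hΩ.frontier_eq]; exact ⟨hγa_cl, haT.2⟩
    have hγb_fr : γ b ∈ frontier Ω := by
      rw [hΩ.frontier_eq]; exact ⟨hγb_cl, hbT.2⟩
    -- three pieces
    have piece1 : |w x - w (γ a)| ≤ K * (a * ‖v‖) := by
      rcases eq_or_lt_of_le ha0 with h | h
      · rw [← h, hγ0]; simp [mul_assoc]
      · have := aux_seg Ω K hK w hcont hdiff hder x (γ a) hx hγa_cl ?_
        · have hd : dist x (γ a) = a * ‖v‖ := by
            rw [dist_eq_norm]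
            simp only [hγ]
            rw [show x - (x + a • v) = -(a • v) by abel, norm_neg, norm_smul,
              Real.norm_eq_abs, abs_of_nonneg ha0]
          rwa [hd] at this
        · intro t ht
          have heq : x + t • (γ a - x) = γ (t * a) := by
            simp only [hγ]
            rw [show x + a • v - x = a • v by abel, smul_smul]
          rw [heq]
          exact hbefore (t * a) ⟨mul_pos ht.1 h, by
            calc t * a < 1 * a := by exact mul_lt_mul_of_pos_right ht.2 h
            _ = a := one_mul a⟩
    have piece2 : |w (γ a) - w (γ b)| ≤ K * ((b - a) * ‖v‖) := by
      have := hbd (γ a) hγa_fr (γ b) hγb_fr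
      have hd : dist (γ a) (γ b) = (b - a) * ‖v‖ := by
        rw [dist_eq_norm]
        simp only [hγ]
        rw [show x + a • v - (x + b • v) = -((b - a) • v) by rw [sub_smul]; abel,
          norm_neg, norm_smul, Real.norm_eq_abs, abs_of_nonneg (by linarith)]
      rwa [hd] at this
    have piece3 : |w (γ b) - w y| ≤ K * ((1 - b) * ‖v‖) := by
      rcases eq_or_lt_of_le hb1 with h | h
      · rw [h, hγ1]; simp [h, mul_assoc]
      · have := aux_seg Ω K hK w hcont hdiff hder (γ b) y hγb_cl hy ?_
        · have hd : dist (γ b) y = (1 - b) * ‖v‖ := by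
            rw [dist_eq_norm]
            simp only [hγ]
            rw [show x + b • v - y = -((1 - b) • v) by
              rw [sub_smul, one_smul, hv]; abel,
              norm_neg, norm_smul, Real.norm_eq_abs, abs_of_nonneg (by linarith)]
          rwa [hd] at this
        · intro t ht
          have heq : γ b + t • (y - γ b) = γ (b + t * (1 - b)) := by
            simp only [hγ]
            rw [show y - (x + b • v) = (1 - b) • v by
              rw [sub_smul, one_smul, hv]; abel, smul_smul, add_smul]
            abel
          rw [heq]
          refine hafter _ ⟨?_, ?_⟩
          · nlinarith [ht.1, ht.2]
          · nlinarith [ht.1, ht.2]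
    have htri : |w x - w y| ≤ |w x - w (γ a)| + |w (γ a) - w (γ b)| + |w (γ b) - w y| := by
      calc |w x - w y| = |(w x - w (γ a)) + (w (γ a) - w (γ b)) + (w (γ b) - w y)| := by
            ring_nf
      _ ≤ _ := by
            refine (abs_add_le _ _).trans ?_
            gcongr
            exact abs_add_le _ _
    have hfinal : |w x - w y| ≤ K * ‖v‖ := by
      calc |w x - w y| ≤ _ := htri
      _ ≤ K * (a * ‖v‖) + K * ((b - a) * ‖v‖) + K * ((1 - b) * ‖v‖) :=
            add_le_add (add_le_add piece1 piece2) piece3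
      _ = K * ‖v‖ := by ring
    rwa [dist_eq_norm', ← hv]
end

section
/- Let X be a finite dimensional normed space, let f : X → ℝ be a K-Lipschitz function and let ε > 0. Then there exists a function g : X → ℝ of class C^∞ such that |g − f| ≤ ε on X and lip(g, B(x₀,r)) ≤ lip(f, B(x₀, r+ε)) + ε for every closed ball B(x₀,r) ⊂ X. -/
open Metric Set MeasureTheory
open scoped Convolution

/-- Lemma (finite dimensional case): uniform approximation of a `K`-Lipschitz function by
`C^∞` functions almost preserving local Lipschitz constants on balls. -/
theorem stmt_11 {X : Type*} [NormedAddCommGroup X] [NormedSpace ℝ X] [FiniteDimensional ℝ X]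
    (K : ℝ) (f : X → ℝ) (hf : IsLipschitzWithOn K f Set.univ) (ε : ℝ) (hε : 0 < ε) :
    ∃ g : X → ℝ,
      ContDiff ℝ (⊤ : ℕ∞) g ∧
      (∀ x : X, |g x - f x| ≤ ε) ∧
      (∀ (x₀ : X) (r : ℝ), 0 < r →
        lipOn g (closedBall x₀ r) ≤ lipOn f (closedBall x₀ (r + ε)) + ε) := by
  classical
  letI : MeasurableSpace X := borel X
  haveI : BorelSpace X := ⟨rfl⟩
  -- replace K by K' := max K 0
  set K' : ℝ := max K 0 with hK'
  have hK'0 : 0 ≤ K' := le_max_right _ _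
  have hf' : ∀ x y : X, |f x - f y| ≤ K' * dist x y := by
    intro x y
    calc |f x - f y| ≤ K * dist x y := hf x (mem_univ x) y (mem_univ y)
      _ ≤ K' * dist x y := mul_le_mul_of_nonneg_right (le_max_left _ _) dist_nonneg
  have hfc : Continuous f :=
    (LipschitzWith.of_dist_le_mul (K := ⟨K', hK'0⟩) fun x y => by
      rw [Real.dist_eq]; exact hf' x y).continuous
  -- the mollification radius
  set δ : ℝ := min ε (ε / (K' + 1)) with hδdef
  have hδpos : 0 < δ := lt_min hε (div_pos hε (by linarith))
  have hδε : δ ≤ ε := min_le_left _ _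
  have hKδ : K' * δ ≤ ε := by
    have h1 : δ ≤ ε / (K' + 1) := min_le_right _ _
    have h2 : K' * δ ≤ K' * (ε / (K' + 1)) := mul_le_mul_of_nonneg_left h1 hK'0
    have h3 : K' * (ε / (K' + 1)) ≤ ε := by
      rw [mul_div_assoc']
      rw [div_le_iff₀ (by linarith : (0:ℝ) < K' + 1)]
      nlinarith
    linarith
  -- the Haar measure and the bump function
  set μ : Measure X := (Module.finBasis ℝ X).addHaar with hμ
  set φ : ContDiffBump (0 : X) := ⟨δ/2, δ, by positivity, by linarith⟩ with hφ
  set g : X → ℝ := (φ.normed μ) ⋆[ContinuousLinearMap.lsmul ℝ ℝ, μ] f with hg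
  have hloc : LocallyIntegrable f μ := hfc.locallyIntegrable
  -- integrability of the integrands
  have hint : ∀ x : X, Integrable (fun t => φ.normed μ t • f (x - t)) μ := by
    intro x
    apply Continuous.integrable_of_hasCompactSupport
    · exact (φ.continuous_normed).smul (hfc.comp (continuous_const.sub continuous_id))
    · exact (φ.hasCompactSupport_normed).smul_right
  have hval : ∀ x : X, g x = ∫ t, φ.normed μ t • f (x - t) ∂μ := by
    intro x
    simp only [hg, convolution_def, ContinuousLinearMap.lsmul_apply]
  have hsupp : ∀ t : X, φ.normed μ t ≠ 0 → ‖t‖ ≤ δ := by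
    intro t ht
    have : t ∈ Function.support (φ.normed μ) := ht
    rw [φ.support_normed_eq] at this
    simp only [mem_ball, dist_zero_right] at this
    exact this.le
  have hφnn : ∀ t : X, 0 ≤ φ.normed μ t := φ.nonneg_normed
  have hφint : ∫ t, φ.normed μ t ∂μ = 1 := φ.integral_normed
  have hφintegrable : Integrable (φ.normed μ) μ := φ.integrable_normed
  -- key estimate: difference of values of g as an integral
  have hdiff : ∀ x y : X, g x - g y = ∫ t, φ.normed μ t • (f (x - t) - f (y - t)) ∂μ := by
    intro x y
    rw [hval x, hval y, ← integral_sub (hint x) (hint y)]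
    congr 1
    ext t
    rw [smul_sub]
  refine ⟨g, ?_, ?_, ?_⟩
  · exact (φ.hasCompactSupport_normed).contDiff_convolution_left _ φ.contDiff_normed hloc
  · -- |g x - f x| ≤ ε
    intro x
    have h1 : f x = ∫ t, φ.normed μ t • f x ∂μ := by
      rw [integral_smul_const, hφint, one_smul]
    have h2 : Integrable (fun t => φ.normed μ t • f x) μ := by
      simpa [smul_eq_mul] using hφintegrable.mul_const (f x)
    have h3 : g x - f x = ∫ t, φ.normed μ t • (f (x - t) - f x) ∂μ := by
      rw [hval x]
      conv_lhs => rw [h1]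
      rw [← integral_sub (hint x) h2]
      congr 1
      ext t
      rw [smul_sub]
    rw [h3]
    calc |∫ t, φ.normed μ t • (f (x - t) - f x) ∂μ|
        ≤ ∫ t, |φ.normed μ t • (f (x - t) - f x)| ∂μ := by
          simpa [Real.norm_eq_abs, abs_mul] using
            norm_integral_le_integral_norm (fun t => φ.normed μ t • (f (x - t) - f x)) (μ := μ)
      _ ≤ ∫ t, φ.normed μ t * ε ∂μ := by
          apply integral_mono_of_nonneg
          · filter_upwards with t; positivity
          · exact hφintegrable.mul_const ε
          · filter_upwards with t
            by_cases ht : φ.normed μ t = 0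
            · simp [ht]
            · have hnt : ‖t‖ ≤ δ := hsupp t ht
              have : |f (x - t) - f x| ≤ ε := by
                calc |f (x - t) - f x| ≤ K' * dist (x - t) x := hf' _ _
                  _ = K' * ‖t‖ := by rw [dist_eq_norm, show x - t - x = -t by abel, norm_neg]
                  _ ≤ K' * δ := mul_le_mul_of_nonneg_left hnt hK'0
                  _ ≤ ε := hKδ
              rw [smul_eq_mul, abs_mul, abs_of_nonneg (hφnn t)]
              exact mul_le_mul_of_nonneg_left this (hφnn t)
      _ = ε := by rw [integral_mul_const, hφint, one_mul]
  · -- Lipschitz constants on balls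
    intro x₀ r hr
    have hsubset : {L : ℝ | 0 < L ∧ ∀ x ∈ closedBall x₀ (r + ε), ∀ y ∈ closedBall x₀ (r + ε),
        |f x - f y| ≤ L * dist x y} ⊆
        {L : ℝ | 0 < L ∧ ∀ x ∈ closedBall x₀ r, ∀ y ∈ closedBall x₀ r,
        |g x - g y| ≤ L * dist x y} := by
      rintro L ⟨hL, hLf⟩
      refine ⟨hL, fun x hx y hy => ?_⟩
      rw [hdiff x y]
      calc |∫ t, φ.normed μ t • (f (x - t) - f (y - t)) ∂μ|
          ≤ ∫ t, |φ.normed μ t • (f (x - t) - f (y - t))| ∂μ := by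
            simpa [Real.norm_eq_abs, abs_mul] using
              norm_integral_le_integral_norm
                (fun t => φ.normed μ t • (f (x - t) - f (y - t))) (μ := μ)
        _ ≤ ∫ t, φ.normed μ t * (L * dist x y) ∂μ := by
            apply integral_mono_of_nonneg
            · filter_upwards with t; positivity
            · exact hφintegrable.mul_const _
            · filter_upwards with t
              by_cases ht : φ.normed μ t = 0
              · simp only [ht, zero_smul, abs_zero, zero_mul]; positivity
              · have hnt : ‖t‖ ≤ δ := hsupp t ht
                have hxt : x - t ∈ closedBall x₀ (r + ε) := by
                  rw [mem_closedBall] at hx ⊢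
                  calc dist (x - t) x₀ ≤ dist (x - t) x + dist x x₀ := dist_triangle _ _ _
                    _ = ‖t‖ + dist x x₀ := by rw [dist_eq_norm, show x - t - x = -t by abel, norm_neg]
                    _ ≤ δ + r := by linarith [hx]
                    _ ≤ r + ε := by linarith
                have hyt : y - t ∈ closedBall x₀ (r + ε) := by
                  rw [mem_closedBall] at hy ⊢
                  calc dist (y - t) x₀ ≤ dist (y - t) y + dist y x₀ := dist_triangle _ _ _
                    _ = ‖t‖ + dist y x₀ := by rw [dist_eq_norm, show y - t - y = -t by abel, norm_neg]
                    _ ≤ δ + r := by linarith [hy]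
                    _ ≤ r + ε := by linarith
                have hd : dist (x - t) (y - t) = dist x y := by
                  rw [dist_eq_norm, dist_eq_norm, show x - t - (y - t) = x - y by abel]
                have : |f (x - t) - f (y - t)| ≤ L * dist x y := by
                  rw [← hd]; exact hLf _ hxt _ hyt
                rw [smul_eq_mul, abs_mul, abs_of_nonneg (hφnn t)]
                exact mul_le_mul_of_nonneg_left this (hφnn t)
        _ = L * dist x y := by rw [integral_mul_const, hφint, one_mul]
    have hne : {L : ℝ | 0 < L ∧ ∀ x ∈ closedBall x₀ (r + ε), ∀ y ∈ closedBall x₀ (r + ε),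
        |f x - f y| ≤ L * dist x y}.Nonempty := by
      refine ⟨K' + 1, by linarith, fun x _ y _ => ?_⟩
      calc |f x - f y| ≤ K' * dist x y := hf' x y
        _ ≤ (K' + 1) * dist x y := mul_le_mul_of_nonneg_right (by linarith) dist_nonneg
    have hbdd : BddBelow {L : ℝ | 0 < L ∧ ∀ x ∈ closedBall x₀ r, ∀ y ∈ closedBall x₀ r,
        |g x - g y| ≤ L * dist x y} := ⟨0, fun L hL => hL.1.le⟩
    have := csInf_le_csInf hbdd hne hsubset
    unfold lipOn
    linarith
end

section
/- Let X be a (not necessarily separable) Hilbert space, let f : X → ℝ be a K-Lipschitz function and let ε > 0. Then there exists a function g : X → ℝ of class C¹ such that |g − f| ≤ ε on X and lip(g, B(x₀,r)) ≤ lip(f, B(x₀, r+ε)) + ε for every closed ball B(x₀,r) ⊂ X. -/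
open Metric Set MeasureTheory

set_option linter.unusedSectionVars false
set_option maxHeartbeats 1000000
open RealInnerProductSpace

lemma mid_norm {X : Type*} [NormedAddCommGroup X] [InnerProductSpace ℝ X] (y z w : X) :
    ‖(1/2:ℝ)•(y+z) - w‖^2 = (1/2)*‖y-w‖^2 + (1/2)*‖z-w‖^2 - (1/4)*‖y-z‖^2 := by
  have h := parallelogram_law_with_norm ℝ (y-w) (z-w)
  have e1 : (1/2:ℝ)•(y+z) - w = (1/2:ℝ)•((y-w)+(z-w)) := by module
  have e2 : y - z = (y-w) - (z-w) := by abel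
  rw [← e2] at h
  rw [e1, norm_smul]
  norm_num
  nlinarith [h]

section Aux
variable {X : Type*} [NormedAddCommGroup X] [InnerProductSpace ℝ X]
variable (f : X → ℝ) (lam : ℝ)

noncomputable def uEnv (x : X) : ℝ := sInf (Set.range fun y => f y + ‖x - y‖^2/(2*lam))

variable {f lam} {K₀ : ℝ}
variable (hK : 1 ≤ K₀) (hf : ∀ a b : X, |f a - f b| ≤ K₀ * ‖a - b‖) (hlam : 0 < lam)

include hK hf hlam

lemma quad_key (t : ℝ) (ht : 0 ≤ t) : K₀ * t - lam * K₀^2/2 ≤ t^2/(2*lam) := by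
  rw [le_div_iff₀ (by positivity)]
  nlinarith [sq_nonneg (t - lam*K₀)]

lemma uEnv_bddBelow (x : X) : BddBelow (Set.range fun y => f y + ‖x - y‖^2/(2*lam)) := by
  refine ⟨f x - lam * K₀^2/2, ?_⟩
  rintro v ⟨y, rfl⟩
  have h1 : f x - f y ≤ K₀ * ‖x - y‖ := (abs_le.1 (hf x y)).2
  have h4 := quad_key hK hf hlam ‖x - y‖ (norm_nonneg _)
  show f x - lam * K₀^2/2 ≤ f y + ‖x - y‖^2/(2*lam)
  linarith

lemma uEnv_le (x y : X) : uEnv f lam x ≤ f y + ‖x - y‖^2/(2*lam) :=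
  csInf_le (uEnv_bddBelow hK hf hlam x) ⟨y, rfl⟩

lemma le_uEnv (x : X) {T : ℝ} (h : ∀ y, T ≤ f y + ‖x - y‖^2/(2*lam)) : T ≤ uEnv f lam x :=
  le_csInf (Set.range_nonempty _) (by rintro v ⟨y, rfl⟩; exact h y)

lemma uEnv_lb (x : X) : f x - lam * K₀^2/2 ≤ uEnv f lam x := by
  refine le_uEnv hK hf hlam x fun y => ?_
  have h1 : f x - f y ≤ K₀ * ‖x - y‖ := (abs_le.1 (hf x y)).2
  have h4 := quad_key hK hf hlam ‖x - y‖ (norm_nonneg _)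
  linarith

lemma uEnv_ub (x : X) : uEnv f lam x ≤ f x := by
  have := uEnv_le hK hf hlam x x
  simpa using this

lemma uEnv_approx (x : X) {δ : ℝ} (hδ : 0 < δ) :
    ∃ y, f y + ‖x - y‖^2/(2*lam) < uEnv f lam x + δ := by
  obtain ⟨v, ⟨y, rfl⟩, hv⟩ := exists_lt_of_csInf_lt (Set.range_nonempty _)
    (lt_add_of_pos_right (uEnv f lam x) hδ)
  exact ⟨y, hv⟩

lemma uEnv_lip (a b : X) : |uEnv f lam a - uEnv f lam b| ≤ K₀ * ‖a - b‖ := by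
  have key : ∀ c d : X, uEnv f lam c - uEnv f lam d ≤ K₀ * ‖c - d‖ := by
    intro c d
    rw [sub_le_iff_le_add]
    refine le_of_forall_pos_le_add fun δ hδ => ?_
    obtain ⟨y, hy⟩ := uEnv_approx hK hf hlam d hδ
    have h1 : uEnv f lam c ≤ f (y + c - d) + ‖c - (y + c - d)‖^2/(2*lam) :=
      uEnv_le hK hf hlam c _
    have h2 : f (y + c - d) - f y ≤ K₀ * ‖(y + c - d) - y‖ := (abs_le.1 (hf _ _)).2
    have e1 : c - (y + c - d) = d - y := by abel
    have e2 : (y + c - d) - y = c - d := by abel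
    rw [e1] at h1; rw [e2] at h2
    linarith
  rw [abs_sub_le_iff]
  refine ⟨key a b, ?_⟩
  have := key b a
  rwa [norm_sub_rev] at this


variable (f lam)
/-- scaled functional whose minimizer gives the sup-convolution -/
noncomputable def PhiF (p y : X) : ℝ := ‖y‖^2 - lam * uEnv f lam y - lam * ⟪p, y⟫
variable {f lam}


lemma uEnv_le_scaled (x y : X) : lam * uEnv f lam x ≤ lam * f y + ‖x - y‖^2/2 := by
  have h := uEnv_le hK hf hlam x y
  have := mul_le_mul_of_nonneg_left h hlam.le
  calc lam * uEnv f lam x ≤ lam * (f y + ‖x - y‖^2/(2*lam)) := this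
    _ = lam * f y + ‖x - y‖^2/2 := by field_simp

lemma le_uEnv_scaled (x : X) (T : ℝ) (h : ∀ y, T ≤ lam * f y + ‖x - y‖^2/2) :
    T ≤ lam * uEnv f lam x := by
  rw [show T = lam * (T/lam) by field_simp]
  refine mul_le_mul_of_nonneg_left (le_uEnv hK hf hlam x fun y => ?_) hlam.le
  rw [div_le_iff₀ hlam] at *
  have := h y
  calc T ≤ lam * f y + ‖x - y‖^2/2 := h y
    _ = (f y + ‖x - y‖^2/(2*lam)) * lam := by field_simp

lemma PhiF_mid (p y z : X) :
    PhiF f lam p ((1/2:ℝ)•(y+z)) ≤ (PhiF f lam p y + PhiF f lam p z)/2 - (1/8)*‖y-z‖^2 := by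
  have hm0 := mid_norm y z 0
  simp only [sub_zero] at hm0
  have hip : ⟪p, (1/2:ℝ)•(y+z)⟫ = (⟪p,y⟫ + ⟪p,z⟫)/2 := by
    rw [real_inner_smul_right, inner_add_right]; ring
  unfold PhiF
  rw [hm0, hip]
  have hT : ((lam * uEnv f lam y + lam * uEnv f lam z)/2 - (1/8)*‖y-z‖^2 : ℝ)
      ≤ lam * uEnv f lam ((1/2:ℝ)•(y+z)) := by
    refine le_uEnv_scaled hK hf hlam _ _ fun w => ?_
    have hy := uEnv_le_scaled hK hf hlam y w
    have hz := uEnv_le_scaled hK hf hlam z w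
    have hmw := mid_norm y z w
    rw [hmw]
    linarith
  linarith

lemma PhiF_bddBelow (p : X) : BddBelow (Set.range (PhiF f lam p)) := by
  refine ⟨-lam * uEnv f lam 0 - (lam*(K₀+‖p‖))^2/4, ?_⟩
  rintro v ⟨y, rfl⟩
  have h1 : uEnv f lam y - uEnv f lam 0 ≤ K₀ * ‖y - 0‖ := (abs_le.1 (uEnv_lip hK hf hlam y 0)).2
  rw [sub_zero] at h1
  have h1' := mul_le_mul_of_nonneg_left h1 hlam.le
  have h2 : ⟪p, y⟫ ≤ ‖p‖ * ‖y‖ := real_inner_le_norm p y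
  have h2' := mul_le_mul_of_nonneg_left h2 hlam.le
  show -lam * uEnv f lam 0 - (lam*(K₀+‖p‖))^2/4 ≤ PhiF f lam p y
  unfold PhiF
  nlinarith [sq_nonneg (‖y‖ - lam*(K₀+‖p‖)/2), h1', h2']

lemma PhiF_continuous (p : X) : Continuous (PhiF f lam p) := by
  have hu : Continuous (uEnv f lam) := by
    have : LipschitzWith (Real.toNNReal K₀) (uEnv f lam) := by
      refine LipschitzWith.of_dist_le_mul fun a b => ?_
      rw [Real.dist_eq, dist_eq_norm]
      calc |uEnv f lam a - uEnv f lam b| ≤ K₀ * ‖a - b‖ := uEnv_lip hK hf hlam a b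
        _ ≤ (Real.toNNReal K₀ : ℝ) * ‖a - b‖ := by
            gcongr
            exact le_max_left _ _
    exact this.continuous
  unfold PhiF
  exact ((continuous_norm.pow 2).sub ((continuous_const.mul hu))).sub
    (continuous_const.mul (continuous_const.inner continuous_id))

lemma PhiF_exists_min [CompleteSpace X] (p : X) : ∃ w : X, ∀ z, PhiF f lam p w ≤ PhiF f lam p z := by
  set m := sInf (Set.range (PhiF f lam p)) with hm
  have hbdd := PhiF_bddBelow hK hf hlam p
  have hne : (Set.range (PhiF f lam p)).Nonempty := Set.range_nonempty _
  have hseq : ∀ n : ℕ, ∃ y, PhiF f lam p y < m + 1/((n:ℝ)+1) := by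
    intro n
    have hpos : (0:ℝ) < 1/((n:ℝ)+1) := by positivity
    obtain ⟨v, ⟨y, rfl⟩, hv⟩ := exists_lt_of_csInf_lt hne (lt_add_of_pos_right m hpos)
    exact ⟨y, hv⟩
  choose y hy using hseq
  have hmle : ∀ z, m ≤ PhiF f lam p z := fun z => csInf_le hbdd ⟨z, rfl⟩
  have key : ∀ n k : ℕ, ‖y n - y k‖^2 ≤ 4*(1/(n+1) + 1/(k+1)) := by
    intro n k
    have hsc := PhiF_mid hK hf hlam p (y n) (y k)
    have h1 := hy n
    have h2 := hy k
    have h3 := hmle ((1/2:ℝ)•(y n + y k))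
    linarith
  have hcauchy : CauchySeq y := by
    apply cauchySeq_of_le_tendsto_0 (fun N : ℕ => Real.sqrt (8*(1/((N:ℝ)+1))))
    · intro n k N hn hk
      rw [dist_eq_norm]
      have h1 : ‖y n - y k‖^2 ≤ 8*(1/((N:ℝ)+1)) := by
        have := key n k
        have e1 : (1:ℝ)/(n+1) ≤ 1/(N+1) := by
          apply one_div_le_one_div_of_le (by positivity)
          exact_mod_cast Nat.succ_le_succ hn
        have e2 : (1:ℝ)/(k+1) ≤ 1/(N+1) := by
          apply one_div_le_one_div_of_le (by positivity)
          exact_mod_cast Nat.succ_le_succ hk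
        linarith
      calc ‖y n - y k‖ = Real.sqrt (‖y n - y k‖^2) := (Real.sqrt_sq (norm_nonneg _)).symm
        _ ≤ Real.sqrt (8*(1/((N:ℝ)+1))) := Real.sqrt_le_sqrt h1
    · have h0 : Filter.Tendsto (fun N : ℕ => (8:ℝ)*(1/((N:ℝ)+1))) Filter.atTop (nhds 0) := by
        simpa using tendsto_one_div_add_atTop_nhds_zero_nat.const_mul (8:ℝ)
      have h2 := (Real.continuous_sqrt.tendsto' 0 0 (by simp)).comp h0
      simpa only [Function.comp_def, one_div] using h2
  obtain ⟨w, hw⟩ := cauchySeq_tendsto_of_complete hcauchy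
  refine ⟨w, fun z => ?_⟩
  have hcont := (PhiF_continuous hK hf hlam p).continuousAt (x := w)
  have hlim : Filter.Tendsto (fun n => PhiF f lam p (y n)) Filter.atTop (nhds (PhiF f lam p w)) :=
    ((PhiF_continuous hK hf hlam p).tendsto w).comp hw
  have hlim2 : Filter.Tendsto (fun n : ℕ => m + 1/(n+1:ℝ)) Filter.atTop (nhds m) := by
    have := tendsto_one_div_add_atTop_nhds_zero_nat (𝕜 := ℝ)
    simpa using (tendsto_const_nhds (x := m)).add this
  have : PhiF f lam p w ≤ m := le_of_tendsto_of_tendsto' hlim hlim2 fun n => (hy n).le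
  exact this.trans (hmle z)


variable {Y : X → X} (hY : ∀ p z : X, PhiF f lam p (Y p) ≤ PhiF f lam p z)
include hY

lemma strong_min (p z : X) : PhiF f lam p (Y p) + (1/4)*‖z - Y p‖^2 ≤ PhiF f lam p z := by
  have hsc := PhiF_mid hK hf hlam p (Y p) z
  have h1 := hY p ((1/2:ℝ)•(Y p + z))
  have : ‖z - Y p‖ = ‖Y p - z‖ := norm_sub_rev _ _
  rw [this]
  linarith

lemma PhiF_diff (p q y : X) : PhiF f lam p y - PhiF f lam q y = lam * ⟪q, y⟫ - lam * ⟪p, y⟫ := by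
  unfold PhiF; ring

lemma Y_lip (p q : X) : ‖Y p - Y q‖ ≤ 2*lam*‖p - q‖ := by
  have h1 := strong_min hK hf hlam hY p (Y q)
  have h2 := strong_min hK hf hlam hY q (Y p)
  have e1 := PhiF_diff hK hf hlam hY p q (Y p)
  have e2 := PhiF_diff hK hf hlam hY p q (Y q)
  have hD : ‖Y q - Y p‖ = ‖Y p - Y q‖ := norm_sub_rev _ _
  rw [hD] at h1
  -- sum: (1/2) D^2 ≤ lam * ⟪p - q, Y p - Y q⟫
  have hsum : (1/2)*‖Y p - Y q‖^2 ≤ lam * ⟪p - q, Y p - Y q⟫ := by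
    have hin : ⟪p - q, Y p - Y q⟫ = ⟪p, Y p⟫ - ⟪p, Y q⟫ - ⟪q, Y p⟫ + ⟪q, Y q⟫ := by
      rw [inner_sub_left, inner_sub_right, inner_sub_right]; ring
    rw [hin]
    linarith
  have hcs : ⟪p - q, Y p - Y q⟫ ≤ ‖p - q‖ * ‖Y p - Y q‖ := real_inner_le_norm _ _
  have hcs' := mul_le_mul_of_nonneg_left hcs hlam.le
  rcases eq_or_lt_of_le (norm_nonneg (Y p - Y q)) with h0 | h0
  · rw [← h0]; positivity
  · have : (1/2)*‖Y p - Y q‖^2 ≤ lam * (‖p - q‖ * ‖Y p - Y q‖) := le_trans hsum hcs'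
    nlinarith

variable (f lam Y) in
noncomputable def starS (p : X) : ℝ := -(PhiF f lam p (Y p))

lemma starS_lower (p q : X) : 0 ≤ starS f lam Y q - starS f lam Y p - lam * ⟪Y p, q - p⟫ := by
  have h1 := hY q (Y p)
  have e2 := PhiF_diff hK hf hlam hY p q (Y p)
  have hin : ⟪Y p, q - p⟫ = ⟪q, Y p⟫ - ⟪p, Y p⟫ := by
    rw [inner_sub_right, real_inner_comm q (Y p), real_inner_comm p (Y p)]
  unfold starS
  rw [hin]
  rw [mul_sub]
  unfold PhiF at *
  linarith [mul_sub lam (⟪q, Y p⟫ : ℝ) (⟪p, Y p⟫ : ℝ)]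

lemma starS_upper (p q : X) :
    starS f lam Y q - starS f lam Y p - lam * ⟪Y p, q - p⟫ ≤ 2*lam^2*‖q - p‖^2 := by
  have h1 := hY p (Y q)
  have e2 := PhiF_diff hK hf hlam hY p q (Y q)
  have hin : ⟪Y p, q - p⟫ = ⟪q, Y p⟫ - ⟪p, Y p⟫ := by
    rw [inner_sub_right, real_inner_comm q (Y p), real_inner_comm p (Y p)]
  have hcs : ⟪q - p, Y q - Y p⟫ ≤ ‖q - p‖ * ‖Y q - Y p‖ := real_inner_le_norm _ _
  have hYl : ‖Y q - Y p‖ ≤ 2*lam*‖q - p‖ := Y_lip hK hf hlam hY q p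
  have hq : ‖q - p‖ ≥ 0 := norm_nonneg _
  have hcs2 : ⟪q - p, Y q - Y p⟫ ≤ 2*lam*‖q - p‖^2 := by
    calc ⟪q - p, Y q - Y p⟫ ≤ ‖q - p‖ * ‖Y q - Y p‖ := hcs
      _ ≤ ‖q - p‖ * (2*lam*‖q - p‖) := by
          apply mul_le_mul_of_nonneg_left hYl hq
      _ = 2*lam*‖q - p‖^2 := by ring
  have hin2 : ⟪q - p, Y q - Y p⟫ = (⟪q, Y q⟫ - ⟪p, Y q⟫) - (⟪q, Y p⟫ - ⟪p, Y p⟫) := by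
    rw [inner_sub_left, inner_sub_right, inner_sub_right]; ring
  have hcs3 := mul_le_mul_of_nonneg_left hcs2 hlam.le
  rw [hin2] at hcs3
  unfold starS PhiF at *
  rw [hin]
  nlinarith [hcs3]

lemma starS_hasFDeriv (p : X) :
    HasFDerivAt (starS f lam Y) (lam • (innerSL ℝ (Y p) : X →L[ℝ] ℝ)) p := by
  rw [hasFDerivAt_iff_isLittleO_nhds_zero]
  rw [Asymptotics.isLittleO_iff]
  intro c hc
  have hpos : 0 < c/(2*lam^2) := by positivity
  filter_upwards [Metric.ball_mem_nhds (0:X) hpos] with h hh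
  simp only [Metric.mem_ball, dist_zero_right] at hh
  have e0 : (p + h) - p = h := by abel
  have h1 := starS_lower hK hf hlam hY p (p+h)
  have h2 := starS_upper hK hf hlam hY p (p+h)
  rw [e0] at h1 h2
  have happ : (lam • (innerSL ℝ (Y p) : X →L[ℝ] ℝ)) h = lam * ⟪Y p, h⟫ := by
    simp [innerSL_apply_apply]
  rw [Real.norm_eq_abs, happ, abs_le]
  constructor
  · have : (0:ℝ) ≤ c * ‖h‖ := by positivity
    linarith
  · have hb : 2*lam^2*‖h‖^2 ≤ c*‖h‖ := by
      have step := mul_le_mul_of_nonneg_left hh.le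
        (show (0:ℝ) ≤ 2*lam^2*‖h‖ by positivity)
      calc 2*lam^2*‖h‖^2 = 2*lam^2*‖h‖*‖h‖ := by ring
        _ ≤ 2*lam^2*‖h‖ * (c/(2*lam^2)) := step
        _ = c*‖h‖ := by field_simp
    linarith

lemma Y_continuous : Continuous Y := by
  have : LipschitzWith (Real.toNNReal (2*lam)) Y := by
    refine LipschitzWith.of_dist_le_mul fun p q => ?_
    rw [dist_eq_norm, dist_eq_norm]
    calc ‖Y p - Y q‖ ≤ 2*lam*‖p - q‖ := Y_lip hK hf hlam hY p q
      _ = (Real.toNNReal (2*lam) : ℝ) * ‖p - q‖ := by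
          rw [Real.coe_toNNReal _ (by positivity)]
  exact this.continuous

lemma starS_contDiff : ContDiff ℝ 1 (starS f lam Y) := by
  rw [contDiff_one_iff_fderiv]
  refine ⟨fun p => (starS_hasFDeriv hK hf hlam hY p).differentiableAt, ?_⟩
  have he : (fderiv ℝ (starS f lam Y)) = fun p => lam • (innerSL ℝ (Y p) : X →L[ℝ] ℝ) :=
    funext fun p => (starS_hasFDeriv hK hf hlam hY p).fderiv
  rw [he]
  exact ((innerSL ℝ).continuous.comp (Y_continuous hK hf hlam hY)).const_smul lam

variable (f lam Y) in
noncomputable def gFun (x : X) : ℝ := (starS f lam Y ((2/lam)•x) - ‖x‖^2)/lam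

lemma gFun_contDiff : ContDiff ℝ 1 (gFun f lam Y) := by
  have h1 : ContDiff ℝ 1 fun x : X => (2/lam)•x := contDiff_id.const_smul _
  exact (((starS_contDiff hK hf hlam hY).comp h1).sub (contDiff_norm_sq ℝ)).div_const lam

omit hY in
lemma gval (x y : X) : -(PhiF f lam ((2/lam)•x) y) - ‖x‖^2 = lam * uEnv f lam y - ‖x - y‖^2 := by
  unfold PhiF
  rw [real_inner_smul_left, norm_sub_sq_real]
  have hl : lam ≠ 0 := ne_of_gt hlam
  field_simp
  ring

lemma gFun_ge (x y : X) : uEnv f lam y - ‖x - y‖^2/lam ≤ gFun f lam Y x := by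
  have h1 := hY ((2/lam)•x) y
  have h2 : lam * uEnv f lam y - ‖x - y‖^2 ≤ lam * gFun f lam Y x := by
    have e1 := gval hK hf hlam x y
    have e2 : lam * gFun f lam Y x = starS f lam Y ((2/lam)•x) - ‖x‖^2 := by
      unfold gFun; field_simp
    unfold starS at e2
    linarith
  have h3 : lam * (uEnv f lam y - ‖x - y‖^2/lam) = lam * uEnv f lam y - ‖x - y‖^2 := by
    field_simp
  refine le_of_mul_le_mul_left ?_ hlam
  rw [h3]; exact h2

lemma gFun_eq (x : X) :
    gFun f lam Y x = uEnv f lam (Y ((2/lam)•x)) - ‖x - Y ((2/lam)•x)‖^2/lam := by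
  have e1 := gval hK hf hlam x (Y ((2/lam)•x))
  unfold gFun starS
  rw [show -PhiF f lam ((2/lam)•x) (Y ((2/lam)•x)) - ‖x‖^2
      = lam * uEnv f lam (Y ((2/lam)•x)) - ‖x - Y ((2/lam)•x)‖^2 from e1]
  field_simp

lemma Y_close (x : X) : ‖x - Y ((2/lam)•x)‖ ≤ lam * K₀ := by
  set t := ‖x - Y ((2/lam)•x)‖ with ht
  have h1 : uEnv f lam x ≤ uEnv f lam (Y ((2/lam)•x)) - t^2/lam := by
    have := gFun_ge hK hf hlam hY x x
    rw [gFun_eq hK hf hlam hY x] at this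
    simpa using this
  have h2 : uEnv f lam (Y ((2/lam)•x)) - uEnv f lam x ≤ K₀ * t := by
    have := (abs_le.1 (uEnv_lip hK hf hlam (Y ((2/lam)•x)) x)).2
    rwa [norm_sub_rev] at this
  have h3 : t^2/lam ≤ K₀ * t := by linarith
  have ht0 : 0 ≤ t := norm_nonneg _
  rcases eq_or_lt_of_le ht0 with h0 | h0
  · rw [← h0]; positivity
  · have h4 : t * t ≤ (lam*K₀) * t := by
      have := (div_le_iff₀ hlam).1 h3
      nlinarith
    exact le_of_mul_le_mul_right (by nlinarith) h0

end Aux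

/-- Lemma (general Hilbert case): uniform approximation of a `K`-Lipschitz function by
`C¹` functions almost preserving local Lipschitz constants on balls. -/
theorem stmt_13 {X : Type*} [NormedAddCommGroup X] [InnerProductSpace ℝ X] [CompleteSpace X]
    (K : ℝ) (f : X → ℝ) (hf : IsLipschitzWithOn K f Set.univ) (ε : ℝ) (hε : 0 < ε) :
    ∃ g : X → ℝ,
      ContDiff ℝ 1 g ∧
      (∀ x : X, |g x - f x| ≤ ε) ∧
      (∀ (x₀ : X) (r : ℝ), 0 < r →
        lipOn g (closedBall x₀ r) ≤ lipOn f (closedBall x₀ (r + ε)) + ε) := by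
  set K₀ : ℝ := max K 1 with hK₀def
  have hK : 1 ≤ K₀ := le_max_right _ _
  have hK0 : 0 < K₀ := lt_of_lt_of_le one_pos hK
  have hf' : ∀ a b : X, |f a - f b| ≤ K₀ * ‖a - b‖ := by
    intro a b
    have h := hf a (mem_univ a) b (mem_univ b)
    rw [dist_eq_norm] at h
    calc |f a - f b| ≤ K * ‖a - b‖ := h
      _ ≤ K₀ * ‖a - b‖ := by
          apply mul_le_mul_of_nonneg_right (le_max_left _ _) (norm_nonneg _)
  set lam : ℝ := ε/(4*K₀^2) with hlamdef
  have hlam : 0 < lam := by positivity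
  have hlamK2 : lam * K₀^2 = ε/4 := by
    rw [hlamdef]; field_simp
  have hlamK : lam * K₀ ≤ ε/4 := by
    have : lam * K₀ * K₀ = ε/4 := by rw [← hlamK2]; ring
    nlinarith [mul_pos hlam hK0]
  choose Y hY using fun p : X => PhiF_exists_min hK hf' hlam p
  refine ⟨gFun f lam Y, gFun_contDiff hK hf' hlam hY, ?_, ?_⟩
  · -- error bound
    intro x
    have h1 : uEnv f lam x ≤ f x := uEnv_ub hK hf' hlam x
    have h2 : f x - lam * K₀^2/2 ≤ uEnv f lam x := uEnv_lb hK hf' hlam x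
    have h3 : uEnv f lam x ≤ gFun f lam Y x := by
      have := gFun_ge hK hf' hlam hY x x
      simpa using this
    have h4 : gFun f lam Y x ≤ uEnv f lam x + lam * K₀^2/4 := by
      rw [gFun_eq hK hf' hlam hY x]
      set t := ‖x - Y ((2/lam)•x)‖ with htdef
      have ht0 : 0 ≤ t := norm_nonneg _
      have h5 : uEnv f lam (Y ((2/lam)•x)) - uEnv f lam x ≤ K₀ * t := by
        have := (abs_le.1 (uEnv_lip hK hf' hlam (Y ((2/lam)•x)) x)).2
        rwa [norm_sub_rev] at this
      have h6 : K₀ * t - lam*K₀^2/4 ≤ t^2/lam := by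
        rw [le_div_iff₀ hlam]
        nlinarith [sq_nonneg (t - lam*K₀/2)]
      linarith
    rw [abs_le]
    constructor <;> nlinarith
  · -- Lipschitz bound
    intro x₀ r hr
    set S := {L : ℝ | 0 < L ∧ ∀ x ∈ closedBall x₀ (r+ε), ∀ y ∈ closedBall x₀ (r+ε),
      |f x - f y| ≤ L * dist x y} with hSdef
    have hSne : S.Nonempty := by
      refine ⟨K₀ + 1, by positivity, fun x _ y _ => ?_⟩
      have := hf' x y
      rw [dist_eq_norm]
      nlinarith [norm_nonneg (x - y)]
    have hSbdd : BddBelow S := ⟨0, fun a ha => ha.1.le⟩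
    have hL : lipOn f (closedBall x₀ (r+ε)) = sInf S := rfl
    obtain ⟨L₁, hL₁S, hL₁lt⟩ : ∃ L₁ ∈ S, L₁ < sInf S + ε/2 :=
      exists_lt_of_csInf_lt hSne (lt_add_of_pos_right _ (by positivity))
    obtain ⟨hL₁pos, hL₁⟩ := hL₁S
    -- Lipschitz bound for uEnv on the medium ball
    have hu_mid : ∀ a ∈ closedBall x₀ (r+ε/4), ∀ b ∈ closedBall x₀ (r+ε/4),
        uEnv f lam a - uEnv f lam b ≤ L₁ * dist a b := by
      intro a ha b hb
      have ha' : ‖a - x₀‖ ≤ r + ε/4 := by rw [← dist_eq_norm]; exact mem_closedBall.1 ha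
      have hb' : ‖b - x₀‖ ≤ r + ε/4 := by rw [← dist_eq_norm]; exact mem_closedBall.1 hb
      rw [sub_le_iff_le_add]
      refine le_of_forall_pos_le_add fun δ' hδ' => ?_
      set δ := min δ' (K₀*ε/8) with hδdef
      have hδ : 0 < δ := lt_min hδ' (by positivity)
      obtain ⟨y, hy⟩ := uEnv_approx hK hf' hlam b hδ
      set t := ‖b - y‖ with htdef
      have ht0 : 0 ≤ t := norm_nonneg _
      -- t is small
      have ht : t ≤ 2*lam*K₀ + δ/K₀ := by
        have hub : uEnv f lam b ≤ f b := uEnv_ub hK hf' hlam b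
        have hfb : f b - f y ≤ K₀ * t := by
          have := (abs_le.1 (hf' b y)).2
          rwa [← htdef] at this
        have ht2 : t^2 ≤ 2*lam*K₀*t + 2*lam*δ := by
          have h7 : t^2/(2*lam) ≤ K₀*t + δ := by linarith
          rw [div_le_iff₀ (by positivity)] at h7
          nlinarith
        by_contra hcon
        push_neg at hcon
        have hc2 : δ/K₀ < t - 2*lam*K₀ := by linarith
        have h8 : (δ/K₀) * t ≤ 2*lam*δ := by
          nlinarith [mul_le_mul_of_nonneg_right hc2.le ht0]
        have h9 : δ * t ≤ 2*lam*δ*K₀ := by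
          have hmul := mul_le_mul_of_nonneg_right h8 hK0.le
          have e1 : δ/K₀*t*K₀ = δ*t := by field_simp
          linarith [e1 ▸ hmul]
        have h10 : t ≤ 2*lam*K₀ := by
          have h11 : δ*t ≤ δ*(2*lam*K₀) := by nlinarith
          exact (mul_le_mul_iff_right₀ hδ).1 h11
        have hpos01 : (0:ℝ) < δ/K₀ := by positivity
        linarith
      have hδK : δ/K₀ ≤ ε/8 := by
        rw [div_le_iff₀ hK0]
        calc δ ≤ K₀*ε/8 := min_le_right _ _
          _ = ε/8*K₀ := by ring
      have htr : t ≤ ε/2 + ε/8 := by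
        have h2l : 2*lam*K₀ ≤ ε/2 := by linarith [hlamK]
        linarith
      -- memberships in the big ball
      have hymem : y ∈ closedBall x₀ (r+ε) := by
        rw [mem_closedBall, dist_eq_norm]
        have e : y - x₀ = -(b - y) + (b - x₀) := by abel
        rw [e]
        calc ‖-(b - y) + (b - x₀)‖ ≤ ‖-(b - y)‖ + ‖b - x₀‖ := norm_add_le _ _
          _ = t + ‖b - x₀‖ := by rw [norm_neg]
          _ ≤ (ε/2 + ε/8) + (r + ε/4) := add_le_add htr hb'
          _ ≤ r + ε := by linarith
      have hyamem : y + a - b ∈ closedBall x₀ (r+ε) := by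
        rw [mem_closedBall, dist_eq_norm]
        have e : y + a - b - x₀ = -(b - y) + (a - x₀) := by abel
        rw [e]
        calc ‖-(b - y) + (a - x₀)‖ ≤ ‖-(b - y)‖ + ‖a - x₀‖ := norm_add_le _ _
          _ = t + ‖a - x₀‖ := by rw [norm_neg]
          _ ≤ (ε/2 + ε/8) + (r + ε/4) := add_le_add htr ha'
          _ ≤ r + ε := by linarith
      -- the chain
      have hstep1 : uEnv f lam a ≤ f (y + a - b) + ‖b - y‖^2/(2*lam) := by
        have := uEnv_le hK hf' hlam a (y + a - b)
        have e : a - (y + a - b) = b - y := by abel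
        rwa [e] at this
      have hstep2 : f (y + a - b) - f y ≤ L₁ * dist a b := by
        have := (abs_le.1 (hL₁ _ hyamem _ hymem)).2
        have e : dist (y + a - b) y = dist a b := by
          rw [dist_eq_norm, dist_eq_norm]
          congr 1
          abel
        rwa [e] at this
      have hδδ' : δ ≤ δ' := min_le_left _ _
      have hyval : f y + t^2/(2*lam) < uEnv f lam b + δ := hy
      linarith
    -- Lipschitz bound for g on the small ball
    have hg_small : ∀ x ∈ closedBall x₀ r, ∀ x' ∈ closedBall x₀ r,
        |gFun f lam Y x - gFun f lam Y x'| ≤ L₁ * dist x x' := by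
      have key : ∀ x ∈ closedBall x₀ r, ∀ x' ∈ closedBall x₀ r,
          gFun f lam Y x - gFun f lam Y x' ≤ L₁ * dist x x' := by
        intro x hx x' hx'
        have hx2 : ‖x - x₀‖ ≤ r := by rw [← dist_eq_norm]; exact mem_closedBall.1 hx
        have hx'2 : ‖x' - x₀‖ ≤ r := by rw [← dist_eq_norm]; exact mem_closedBall.1 hx'
        set ys := Y ((2/lam)•x) with hysdef
        have hclose : ‖x - ys‖ ≤ lam * K₀ := Y_close hK hf' hlam hY x
        have hlamK4 : lam * K₀ ≤ ε/4 := hlamK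
        have hys_mem : ys ∈ closedBall x₀ (r+ε/4) := by
          rw [mem_closedBall, dist_eq_norm]
          have e : ys - x₀ = -(x - ys) + (x - x₀) := by abel
          rw [e]
          calc ‖-(x - ys) + (x - x₀)‖ ≤ ‖-(x - ys)‖ + ‖x - x₀‖ := norm_add_le _ _
            _ = ‖x - ys‖ + ‖x - x₀‖ := by rw [norm_neg]
            _ ≤ ε/4 + r := add_le_add (le_trans hclose hlamK4) hx2
            _ = r + ε/4 := by ring
        have hys2_mem : ys + x' - x ∈ closedBall x₀ (r+ε/4) := by
          rw [mem_closedBall, dist_eq_norm]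
          have e : ys + x' - x - x₀ = -(x - ys) + (x' - x₀) := by abel
          rw [e]
          calc ‖-(x - ys) + (x' - x₀)‖ ≤ ‖-(x - ys)‖ + ‖x' - x₀‖ := norm_add_le _ _
            _ = ‖x - ys‖ + ‖x' - x₀‖ := by rw [norm_neg]
            _ ≤ ε/4 + r := add_le_add (le_trans hclose hlamK4) hx'2
            _ = r + ε/4 := by ring
        have h1 : gFun f lam Y x = uEnv f lam ys - ‖x - ys‖^2/lam :=
          gFun_eq hK hf' hlam hY x
        have h2 : uEnv f lam (ys + x' - x) - ‖x' - (ys + x' - x)‖^2/lam ≤ gFun f lam Y x' :=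
          gFun_ge hK hf' hlam hY x' _
        have e : x' - (ys + x' - x) = x - ys := by abel
        rw [e] at h2
        have h3 : uEnv f lam ys - uEnv f lam (ys + x' - x) ≤ L₁ * dist x x' := by
          have := hu_mid ys hys_mem (ys + x' - x) hys2_mem
          have e2 : dist ys (ys + x' - x) = dist x x' := by
            rw [dist_eq_norm, dist_eq_norm]
            congr 1
            abel
          rwa [e2] at this
        linarith
      intro x hx x' hx'
      rw [abs_sub_le_iff]
      refine ⟨key x hx x' hx', ?_⟩
      have := key x' hx' x hx
      rwa [dist_comm] at this
    -- conclude
    have hgS : L₁ ∈ {L : ℝ | 0 < L ∧ ∀ x ∈ closedBall x₀ r, ∀ y ∈ closedBall x₀ r,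
        |gFun f lam Y x - gFun f lam Y y| ≤ L * dist x y} := ⟨hL₁pos, hg_small⟩
    have hle : lipOn (gFun f lam Y) (closedBall x₀ r) ≤ L₁ :=
      csInf_le ⟨0, fun a ha => ha.1.le⟩ hgS
    rw [hL]
    linarith
end

section
/- Equip ℝ² with the ℓ₁ norm ‖(x,y)‖₁ = |x| + |y|, let Ω = {(x,y) ∈ ℝ² : x² + y² < 1}, and define u₀(x,y) = |x| − |y| for (x,y) ∈ ∂Ω. Then: (i) u₀ is 1-Lipschitz on ∂Ω with respect to the ℓ₁ distance; and (ii) every function u : cl(Ω) → ℝ which is 1-Lipschitz with respect to the ℓ₁ distance and satisfies u = u₀ on ∂Ω must satisfy u(x,0) = |x| for every x ∈ [−1,1], and in particular u is not differentiable at (0,0). -/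
open Metric Set MeasureTheory

/-- Example: on the euclidean unit disk `Ω` of `ℝ²` equipped with the `ℓ₁` norm
`‖(x,y)‖₁ = |x| + |y|`, the boundary datum `u₀(x,y) = |x| − |y|` is 1-Lipschitz on the unit
circle `∂Ω` for the `ℓ₁` distance, and every 1-Lipschitz (for the `ℓ₁` distance) extension
`u` of `u₀` to the closed disk satisfies `u(x,0) = |x|` for all `x ∈ [−1,1]`; in particular
`u` is not differentiable at `(0,0)`. -/
theorem stmt_19 :
    (∀ p q : ℝ × ℝ, p.1 ^ 2 + p.2 ^ 2 = 1 → q.1 ^ 2 + q.2 ^ 2 = 1 →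
      |(|p.1| - |p.2|) - (|q.1| - |q.2|)| ≤ |p.1 - q.1| + |p.2 - q.2|) ∧
    (∀ u : ℝ × ℝ → ℝ,
      (∀ p q : ℝ × ℝ, p.1 ^ 2 + p.2 ^ 2 ≤ 1 → q.1 ^ 2 + q.2 ^ 2 ≤ 1 →
        |u p - u q| ≤ |p.1 - q.1| + |p.2 - q.2|) →
      (∀ p : ℝ × ℝ, p.1 ^ 2 + p.2 ^ 2 = 1 → u p = |p.1| - |p.2|) →
      (∀ x ∈ Icc (-1 : ℝ) 1, u (x, 0) = |x|) ∧
      ¬ DifferentiableAt ℝ u ((0 : ℝ), (0 : ℝ))) := by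
  constructor
  · intro p q _ _
    have h1 : |(|p.1| - |q.1|)| ≤ |p.1 - q.1| := abs_abs_sub_abs_le_abs_sub _ _
    have h2 : |(|p.2| - |q.2|)| ≤ |p.2 - q.2| := abs_abs_sub_abs_le_abs_sub _ _
    calc |(|p.1| - |p.2|) - (|q.1| - |q.2|)|
        = |(|p.1| - |q.1|) - (|p.2| - |q.2|)| := by ring_nf
      _ ≤ |(|p.1| - |q.1|)| + |(|p.2| - |q.2|)| := abs_sub _ _
      _ ≤ |p.1 - q.1| + |p.2 - q.2| := add_le_add h1 h2
  · intro u hL h0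
    have key : ∀ x ∈ Icc (-1 : ℝ) 1, u (x, 0) = |x| := by
      intro x hx
      obtain ⟨hx1, hx2⟩ := hx
      have hxsq : x ^ 2 + (0 : ℝ) ^ 2 ≤ 1 := by nlinarith
      have e1 : u (1, 0) = 1 := by simpa using h0 (1, 0) (by norm_num)
      have e2 : u (-1, 0) = 1 := by simpa using h0 (-1, 0) (by norm_num)
      have e3 : u (0, 1) = -1 := by simpa using h0 (0, 1) (by norm_num)
      have l1 := hL (x, 0) (1, 0) hxsq (by norm_num)
      have l2 := hL (x, 0) (-1, 0) hxsq (by norm_num)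
      have l3 := hL (x, 0) (0, 1) hxsq (by norm_num)
      simp only [e1, e2, e3] at l1 l2 l3
      have b1 : |x - (1 : ℝ)| = 1 - x := by rw [abs_of_nonpos (by linarith)]; ring
      have b2 : |x - (-1 : ℝ)| = 1 + x := by rw [abs_of_nonneg (by linarith)]; ring
      simp only [b1, b2, sub_zero, sub_self, abs_zero, add_zero] at l1 l2 l3
      have A1 := abs_le.mp l1
      have A2 := abs_le.mp l2
      have A3 := abs_le.mp l3
      rcases abs_cases x with ⟨h, _⟩ | ⟨h, _⟩ <;>
        [ (rw [h]; norm_num at A3 ⊢; linarith [A1.1, A1.2, A3.1, A3.2]);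
          (rw [h]; norm_num at A3 ⊢; linarith [A2.1, A2.2, A3.1, A3.2])]
    refine ⟨key, ?_⟩
    intro hd
    have hcomp : DifferentiableAt ℝ (fun x : ℝ => u (x, 0)) 0 := by
      have hmap : DifferentiableAt ℝ (fun x : ℝ => ((x, 0) : ℝ × ℝ)) 0 :=
        (differentiableAt_id.prodMk (differentiableAt_const 0))
      exact DifferentiableAt.comp (g := u) (f := fun x : ℝ => ((x, 0) : ℝ × ℝ)) 0 hd hmap
    have heq : (fun x : ℝ => u (x, 0)) =ᶠ[nhds 0] fun x => |x| := by
      filter_upwards [Icc_mem_nhds (by norm_num : (-1:ℝ) < 0) (by norm_num : (0:ℝ) < 1)]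
        with x hx
      exact key x hx
    have : DifferentiableAt ℝ (fun x : ℝ => |x|) 0 := (heq.differentiableAt_iff).mp hcomp
    exact not_differentiableAt_abs_zero this
end
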